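/- arXiv:1509.08781 — 5 statements merged into one kernel-verified Lean document; each statement's English description precedes it below -/
import Mathlib

section
/- Let A₁, A₂ be invertible 2×2 real matrices with ‖A₁‖ < 1 and ‖A₂‖ < 1, let q > 1, p ∈ (0,1), and s > 0, and write p₁ := p, p₂ := 1−p. Then the limit R_q(A₁, A₂, p, s) := lim_{n→∞} (1/n) · log( Σ_{i₁,…,i_n ∈ {1,2}} φ^s(A_{i₁}⋯A_{i_n})^{1−q} p_{i₁}^q ⋯ p_{i_n}^q ) exists and is a finite real number. -/
open MeasureTheory Filter Topology

noncomputable section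

/-- The operator norm of a `d × d` real matrix induced by the Euclidean norm on `ℝ^d`. -/
noncomputable def opNorm {d : ℕ} (A : Matrix (Fin d) (Fin d) ℝ) : ℝ :=
  ‖Matrix.toEuclideanCLM (𝕜 := ℝ) (n := Fin d) A‖

/-- The singular values of a `d × d` real matrix, in decreasing order:
`singularValues A j` is `σ_{j+1}(A)`, the `(j+1)`-st largest singular value. -/
noncomputable def singularValues {d : ℕ} (A : Matrix (Fin d) (Fin d) ℝ) : Fin d → ℝ :=
  fun j =>
    (fun i => Real.sqrt ((Matrix.isHermitian_conjTranspose_mul_self A).eigenvalues i))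
      (Tuple.sort (fun i => Real.sqrt ((Matrix.isHermitian_conjTranspose_mul_self A).eigenvalues i))
        (Fin.rev j))

/-- The singular value function `φ^s(A)`. -/
noncomputable def svf {d : ℕ} (s : ℝ) (A : Matrix (Fin d) (Fin d) ℝ) : ℝ :=
  if (d : ℝ) ≤ s then |A.det| ^ (s / d)
  else ∏ i : Fin d,
    if (i : ℕ) < ⌊s⌋₊ then singularValues A i
    else if (i : ℕ) = ⌊s⌋₊ then singularValues A i ^ (s - (⌊s⌋₊ : ℝ))
    else 1

/-- The product `A_{w 0} ⋯ A_{w (n-1)}` of matrices along the word `w`. -/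
noncomputable def wordProd {d n : ℕ} (A : Fin 2 → Matrix (Fin d) (Fin d) ℝ)
    (w : Fin n → Fin 2) : Matrix (Fin d) (Fin d) ℝ :=
  (List.ofFn fun j => A (w j)).prod

/-- The probability vector `(p, 1-p)`. -/
noncomputable def pvec (p : ℝ) : Fin 2 → ℝ := ![p, 1 - p]

/-- `Σ_{i₁,…,i_n ∈ {1,2}} φ^s(A_{i₁}⋯A_{i_n})^{1−q} p_{i₁}^q ⋯ p_{i_n}^q`. -/
noncomputable def Zsum (A : Fin 2 → Matrix (Fin 2) (Fin 2) ℝ) (p q s : ℝ) (n : ℕ) : ℝ :=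
  ∑ w : Fin n → Fin 2,
    svf s (wordProd A w) ^ (1 - q) * ∏ j : Fin n, pvec p (w j) ^ q

/-- `𝔯_q(A₁, A₂, p)`. -/
noncomputable def rqDim (A : Fin 2 → Matrix (Fin 2) (Fin 2) ℝ) (p q : ℝ) : ℝ :=
  sSup {s : ℝ | 0 < s ∧ Summable (fun n : ℕ => Zsum A p q s (n + 1))}

/-- `R_q(A₁, A₂, p, s)`. -/
noncomputable def Rq (A : Fin 2 → Matrix (Fin 2) (Fin 2) ℝ) (p q s : ℝ) : ℝ :=
  limUnder atTop (fun n : ℕ => (1 / (n : ℝ)) * Real.log (Zsum A p q s n))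

/-- The minimum over all words of length `n` of the norm of the corresponding product. -/
noncomputable def minNormProd (A : Fin 2 → Matrix (Fin 2) (Fin 2) ℝ) (n : ℕ) : ℝ :=
  ⨅ w : Fin n → Fin 2, opNorm (wordProd A w)

/-- The lower spectral radius `ϱ̲(A₁, A₂)`. -/
noncomputable def lsr (A : Fin 2 → Matrix (Fin 2) (Fin 2) ℝ) : ℝ :=
  limUnder atTop (fun n : ℕ => minNormProd A n ^ (1 / (n : ℝ)))

/-- Pairs of invertible `2 × 2` matrices of operator norm less than one. -/
def validPair : Set (Matrix (Fin 2) (Fin 2) ℝ × Matrix (Fin 2) (Fin 2) ℝ) :=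
  {B | IsUnit B.1 ∧ IsUnit B.2 ∧ opNorm B.1 < 1 ∧ opNorm B.2 < 1}

/-- Rotation of `ℝ²` about the origin through angle `θ`. -/
noncomputable def rot (θ : ℝ) : Matrix (Fin 2) (Fin 2) ℝ :=
  !![Real.cos θ, -Real.sin θ; Real.sin θ, Real.cos θ]

/-- `(A₁, A₂)` is `(c, ε, λ)`-resistant. -/
def ResistantWith (c ε lam : ℝ) (A : Fin 2 → Matrix (Fin 2) (Fin 2) ℝ) : Prop :=
  ∀ n : ℕ, 1 ≤ n → ∀ w : Fin n → Fin 2,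
    ((Finset.univ.filter fun j => w j = 1).card : ℝ) ≤ ε * n →
    c * lam ^ n ≤ opNorm (wordProd A w)

/-- `(A₁, A₂)` is resistant. -/
def Resistant (A : Fin 2 → Matrix (Fin 2) (Fin 2) ℝ) : Prop :=
  ∃ c > (0:ℝ), ∃ ε > (0:ℝ), ∃ lam > (1:ℝ), ResistantWith c ε lam A

/-- `ℋ`: `2 × 2` real matrices of determinant one with two unequal real eigenvalues. -/
def Hset : Set (Matrix (Fin 2) (Fin 2) ℝ) :=
  {H | H.det = 1 ∧ ∃ a b : ℝ, a ≠ b ∧ H.charpoly.IsRoot a ∧ H.charpoly.IsRoot b}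

/-- `ℰ`: `2 × 2` real matrices of determinant one with non-real eigenvalues. -/
def Eset : Set (Matrix (Fin 2) (Fin 2) ℝ) :=
  {R | R.det = 1 ∧ ∀ x : ℝ, ¬ R.charpoly.IsRoot x}


/-- Abbreviation for the space of `2 × 2` real matrices. -/
abbrev Mat2 := Matrix (Fin 2) (Fin 2) ℝ

/-! ### Auxiliary lemmas for `stmt3` -/

theorem sort_fin2_max (g : Fin 2 → ℝ) : g (Tuple.sort g 1) = max (g 0) (g 1) := by
  have hmono := Tuple.monotone_sort g
  have h01 : (g ∘ Tuple.sort g) 0 ≤ (g ∘ Tuple.sort g) 1 := hmono (by norm_num : (0:Fin 2) ≤ 1)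
  simp only [Function.comp] at h01
  rcases (by decide : ∀ σ : Equiv.Perm (Fin 2), (σ 0 = 0 ∧ σ 1 = 1) ∨ (σ 0 = 1 ∧ σ 1 = 0))
    (Tuple.sort g) with ⟨e0, e1⟩ | ⟨e0, e1⟩ <;> simp only [e0, e1] at h01 ⊢
  · rw [max_eq_right h01]
  · rw [max_eq_left h01]

theorem sort_fin2_min (g : Fin 2 → ℝ) : g (Tuple.sort g 0) = min (g 0) (g 1) := by
  have hmono := Tuple.monotone_sort g
  have h01 : (g ∘ Tuple.sort g) 0 ≤ (g ∘ Tuple.sort g) 1 := hmono (by norm_num : (0:Fin 2) ≤ 1)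
  simp only [Function.comp] at h01
  rcases (by decide : ∀ σ : Equiv.Perm (Fin 2), (σ 0 = 0 ∧ σ 1 = 1) ∨ (σ 0 = 1 ∧ σ 1 = 0))
    (Tuple.sort g) with ⟨e0, e1⟩ | ⟨e0, e1⟩ <;> simp only [e0, e1] at h01 ⊢
  · rw [min_eq_left h01]
  · rw [min_eq_right h01]

theorem sqrt_max' (a b : ℝ) : Real.sqrt (max a b) = max (Real.sqrt a) (Real.sqrt b) := by
  rcases le_total a b with h | h
  · rw [max_eq_right h, max_eq_right (Real.sqrt_le_sqrt h)]
  · rw [max_eq_left h, max_eq_left (Real.sqrt_le_sqrt h)]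

theorem sqrt_min' (a b : ℝ) : Real.sqrt (min a b) = min (Real.sqrt a) (Real.sqrt b) := by
  rcases le_total a b with h | h
  · rw [min_eq_left h, min_eq_left (Real.sqrt_le_sqrt h)]
  · rw [min_eq_right h, min_eq_right (Real.sqrt_le_sqrt h)]

section SingularValues

open Matrix RealInnerProductSpace

variable (A : Mat2)

theorem sv0_eq : singularValues A 0 =
    Real.sqrt (max ((Matrix.isHermitian_conjTranspose_mul_self A).eigenvalues 0)
      ((Matrix.isHermitian_conjTranspose_mul_self A).eigenvalues 1)) := by
  have h : (Fin.rev (0 : Fin 2)) = 1 := by decide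
  rw [singularValues, h]
  exact (sort_fin2_max
    (fun i => Real.sqrt ((Matrix.isHermitian_conjTranspose_mul_self A).eigenvalues i))).trans
    (sqrt_max' _ _).symm

theorem sv1_eq : singularValues A 1 =
    Real.sqrt (min ((Matrix.isHermitian_conjTranspose_mul_self A).eigenvalues 0)
      ((Matrix.isHermitian_conjTranspose_mul_self A).eigenvalues 1)) := by
  have h : (Fin.rev (1 : Fin 2)) = 0 := by decide
  rw [singularValues, h]
  exact (sort_fin2_min
    (fun i => Real.sqrt ((Matrix.isHermitian_conjTranspose_mul_self A).eigenvalues i))).trans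
    (sqrt_min' _ _).symm

theorem lam_mul_lam :
    (Matrix.isHermitian_conjTranspose_mul_self A).eigenvalues 0 *
    (Matrix.isHermitian_conjTranspose_mul_self A).eigenvalues 1 = A.det ^ 2 := by
  have h := (Matrix.isHermitian_conjTranspose_mul_self A).det_eq_prod_eigenvalues
  rw [Matrix.det_mul, Matrix.det_conjTranspose, star_trivial, Fin.prod_univ_two] at h
  simp only [RCLike.ofReal_real_eq_id, id] at h
  rw [← h]; ring

theorem lam_pos (hA : IsUnit A) (i : Fin 2) :
    0 < (Matrix.isHermitian_conjTranspose_mul_self A).eigenvalues i := by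
  have hdet : A.det ≠ 0 := ((Matrix.isUnit_iff_isUnit_det A).1 hA).ne_zero
  have hnn := Matrix.eigenvalues_conjTranspose_mul_self_nonneg A
  have hprod := lam_mul_lam A
  have hsq : 0 < A.det ^ 2 := by positivity
  fin_cases i
  · rcases lt_or_eq_of_le (hnn 0) with h | h
    · exact h
    · exfalso; rw [← h] at hprod; simp at hprod; nlinarith
  · rcases lt_or_eq_of_le (hnn 1) with h | h
    · exact h
    · exfalso; rw [← h] at hprod; simp at hprod; nlinarith

theorem opNorm_eq_sqrt_max :
    opNorm A = Real.sqrt (max ((Matrix.isHermitian_conjTranspose_mul_self A).eigenvalues 0)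
      ((Matrix.isHermitian_conjTranspose_mul_self A).eigenvalues 1)) := by
  set hM := Matrix.isHermitian_conjTranspose_mul_self A with hMdef
  set T := Matrix.toEuclideanCLM (𝕜 := ℝ) A with hT
  set S := Matrix.toEuclideanCLM (𝕜 := ℝ) (Aᴴ * A) with hS
  set b := hM.eigenvectorBasis with hb
  have lamnn : ∀ i, 0 ≤ hM.eigenvalues i :=
    Matrix.eigenvalues_conjTranspose_mul_self_nonneg A
  have hSb : ∀ i, S (b i) = hM.eigenvalues i • b i := by
    intro i
    apply WithLp.ofLp_injective
    simp only [hS, Matrix.ofLp_toEuclideanCLM]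
    rw [show WithLp.ofLp (b i) = ⇑(b i) from rfl]
    rw [hM.mulVec_eigenvectorBasis i]
    rfl
  have hSsym : ∀ x y, ⟪x, S y⟫ = ⟪S x, y⟫ := by
    intro x y
    have hstar : star S = S := by
      rw [hS, ← map_star]
      congr 1
    rw [← ContinuousLinearMap.adjoint_inner_left, ← ContinuousLinearMap.star_eq_adjoint, hstar]
  have hTx : ∀ x, ‖T x‖ ^ 2 = ⟪x, S x⟫ := by
    intro x
    have h1 : S x = (star T * T) x := by
      rw [hS, hT, ← map_star, ← _root_.map_mul, Matrix.star_eq_conjTranspose]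
    rw [h1]
    have h2 : (star T * T) x = (ContinuousLinearMap.adjoint T) (T x) := by
      rw [← ContinuousLinearMap.star_eq_adjoint]; rfl
    rw [h2, real_inner_comm, ContinuousLinearMap.adjoint_inner_left,
      real_inner_self_eq_norm_sq]
  have hexp : ∀ x : EuclideanSpace ℝ (Fin 2), ⟪x, S x⟫ =
      ∑ i : Fin 2, hM.eigenvalues i * ⟪b i, x⟫ ^ 2 := by
    intro x
    rw [← b.sum_inner_mul_inner x (S x)]
    refine Finset.sum_congr rfl fun i _ => ?_
    rw [hSsym (b i) x, hSb i, real_inner_smul_left, real_inner_comm x (b i)]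
    ring
  have hnorm : ∀ x : EuclideanSpace ℝ (Fin 2),
      ‖x‖ ^ 2 = ∑ i : Fin 2, ⟪b i, x⟫ ^ 2 := by
    intro x
    rw [← real_inner_self_eq_norm_sq, ← b.sum_inner_mul_inner x x]
    refine Finset.sum_congr rfl fun i _ => ?_
    rw [real_inner_comm x (b i)]; ring
  set lmax := max (hM.eigenvalues 0) (hM.eigenvalues 1) with hlmax
  have hlmaxnn : 0 ≤ lmax := le_trans (lamnn 0) (le_max_left _ _)
  have hub : opNorm A ≤ Real.sqrt lmax := by
    refine ContinuousLinearMap.opNorm_le_bound _ (Real.sqrt_nonneg _) fun x => ?_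
    have h1 : ‖T x‖ ^ 2 ≤ lmax * ‖x‖ ^ 2 := by
      rw [hTx x, hexp x, hnorm x, Fin.sum_univ_two, Fin.sum_univ_two, mul_add]
      have e0 : hM.eigenvalues 0 ≤ lmax := le_max_left _ _
      have e1 : hM.eigenvalues 1 ≤ lmax := le_max_right _ _
      have s0 : (0:ℝ) ≤ ⟪b 0, x⟫ ^ 2 := sq_nonneg _
      have s1 : (0:ℝ) ≤ ⟪b 1, x⟫ ^ 2 := sq_nonneg _
      nlinarith
    calc ‖T x‖ = Real.sqrt (‖T x‖ ^ 2) := (Real.sqrt_sq (norm_nonneg _)).symm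
    _ ≤ Real.sqrt (lmax * ‖x‖ ^ 2) := Real.sqrt_le_sqrt h1
    _ = Real.sqrt lmax * ‖x‖ := by
        rw [Real.sqrt_mul hlmaxnn, Real.sqrt_sq (norm_nonneg _)]
  have hlb : ∀ i, Real.sqrt (hM.eigenvalues i) ≤ opNorm A := by
    intro i
    have hbi : ‖b i‖ = 1 := b.orthonormal.1 i
    have h1 : ‖T (b i)‖ ^ 2 = hM.eigenvalues i := by
      rw [hTx (b i), hSsym (b i) (b i), hSb i, real_inner_smul_left,
        real_inner_self_eq_norm_sq, hbi]
      ring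
    have h2 : ‖T (b i)‖ = Real.sqrt (hM.eigenvalues i) := by
      rw [← h1, Real.sqrt_sq (norm_nonneg _)]
    calc Real.sqrt (hM.eigenvalues i) = ‖T (b i)‖ := h2.symm
    _ ≤ opNorm A * ‖b i‖ := T.le_opNorm (b i)
    _ = opNorm A := by rw [hbi, mul_one]
  refine le_antisymm hub ?_
  have h : Real.sqrt lmax = max (Real.sqrt (hM.eigenvalues 0)) (Real.sqrt (hM.eigenvalues 1)) :=
    sqrt_max' _ _
  rw [h]
  exact max_le (hlb 0) (hlb 1)

theorem sv0_eq_opNorm : singularValues A 0 = opNorm A := by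
  rw [sv0_eq, opNorm_eq_sqrt_max]

theorem sv0_mul_sv1 : singularValues A 0 * singularValues A 1 = |A.det| := by
  have hnn : (0:ℝ) ≤ max ((Matrix.isHermitian_conjTranspose_mul_self A).eigenvalues 0)
      ((Matrix.isHermitian_conjTranspose_mul_self A).eigenvalues 1) :=
    le_trans (Matrix.eigenvalues_conjTranspose_mul_self_nonneg A 0) (le_max_left _ _)
  rw [sv0_eq, sv1_eq, ← Real.sqrt_mul hnn]
  have hmm : ∀ a b : ℝ, max a b * min a b = a * b := by
    intro a b
    rcases le_total a b with h | h
    · rw [max_eq_right h, min_eq_left h, mul_comm]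
    · rw [max_eq_left h, min_eq_right h]
  rw [hmm, lam_mul_lam, Real.sqrt_sq_eq_abs]

theorem sv1_le_sv0 : singularValues A 1 ≤ singularValues A 0 := by
  rw [sv0_eq, sv1_eq]
  exact Real.sqrt_le_sqrt min_le_max

theorem sv1_pos (hA : IsUnit A) : 0 < singularValues A 1 := by
  rw [sv1_eq]
  exact Real.sqrt_pos.2 (lt_min (lam_pos A hA 0) (lam_pos A hA 1))

theorem opNorm_pos (hA : IsUnit A) : 0 < opNorm A :=
  lt_of_lt_of_le (sv1_pos A hA) ((sv1_le_sv0 A).trans_eq (sv0_eq_opNorm A))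

theorem absdet_le_opNorm_sq : |A.det| ≤ opNorm A ^ 2 := by
  rw [← sv0_mul_sv1, ← sv0_eq_opNorm, sq]
  have h0 : 0 ≤ singularValues A 0 := by rw [sv0_eq]; exact Real.sqrt_nonneg _
  exact mul_le_mul_of_nonneg_left (sv1_le_sv0 A) h0

theorem opNorm_mul_le (B : Mat2) : opNorm (A * B) ≤ opNorm A * opNorm B := by
  rw [opNorm, opNorm, opNorm, _root_.map_mul]
  exact norm_mul_le _ _

end SingularValues

section Svf

noncomputable def aE (s : ℝ) : ℝ := max 0 (min s (2 - s))
noncomputable def bE (s : ℝ) : ℝ := if 2 ≤ s then s / 2 else max 0 (s - 1)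

theorem aE_nonneg (s : ℝ) : 0 ≤ aE s := le_max_left _ _

theorem bE_nonneg (s : ℝ) : 0 ≤ bE s := by
  rw [bE]; split
  · linarith
  · exact le_max_left _ _

theorem aE_bE (s : ℝ) (hs : 0 < s) : aE s / 2 + bE s = s / 2 := by
  rw [aE, bE]
  rcases le_or_gt 2 s with h2 | h2
  · rw [if_pos h2, min_eq_right (by linarith), max_eq_left (by linarith)]; ring
  · rw [if_neg (not_le.2 h2)]
    rcases le_or_gt s 1 with h1 | h1
    · rw [min_eq_left (by linarith), max_eq_right hs.le, max_eq_left (by linarith)]; ring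
    · rw [min_eq_right (by linarith), max_eq_right (by linarith), max_eq_right (by linarith)]
      ring

variable (A : Mat2)

theorem svf_eq (s : ℝ) (hs : 0 < s) (hA : IsUnit A) :
    svf s A = opNorm A ^ aE s * |A.det| ^ bE s := by
  have h1 : 0 < singularValues A 1 := sv1_pos A hA
  have h0' : 0 < singularValues A 0 := lt_of_lt_of_le h1 (sv1_le_sv0 A)
  rcases le_or_gt 2 s with h2 | h2
  · rw [svf, if_pos (by push_cast; linarith), aE, bE, if_pos h2,
      min_eq_right (by linarith), max_eq_left (by linarith), Real.rpow_zero, one_mul]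
    norm_num
  · rw [svf, if_neg (by push_cast; linarith)]
    rcases le_or_gt 1 s with h1s | h1s
    · have hfl : ⌊s⌋₊ = 1 := by
        rw [Nat.floor_eq_iff (by linarith)]
        push_cast; constructor <;> linarith
      rw [Fin.prod_univ_two, hfl]
      norm_num
      rw [aE, bE, if_neg (not_le.2 h2), min_eq_right (by linarith),
        max_eq_right (by linarith : (0:ℝ) ≤ 2 - s), max_eq_right (by linarith : (0:ℝ) ≤ s - 1)]
      rw [← sv0_eq_opNorm, ← sv0_mul_sv1,
        Real.mul_rpow h0'.le h1.le, ← mul_assoc, ← Real.rpow_add h0']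
      have he : 2 - s + (s - 1) = 1 := by ring
      rw [he, Real.rpow_one]
    · have hfl : ⌊s⌋₊ = 0 := Nat.floor_eq_zero.2 h1s
      rw [Fin.prod_univ_two, hfl]
      norm_num
      rw [aE, bE, if_neg (not_le.2 h2), min_eq_left (by linarith),
        max_eq_right hs.le, max_eq_left (by linarith), Real.rpow_zero, mul_one,
        ← sv0_eq_opNorm]

theorem svf_pos (s : ℝ) (hs : 0 < s) (hA : IsUnit A) : 0 < svf s A := by
  rw [svf_eq A s hs hA]
  have hd : (0:ℝ) < |A.det| :=
    abs_pos.2 (((Matrix.isUnit_iff_isUnit_det A).1 hA).ne_zero)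
  exact mul_pos (Real.rpow_pos_of_pos (opNorm_pos A hA) _) (Real.rpow_pos_of_pos hd _)

end Svf

theorem svf_submul (s : ℝ) (hs : 0 < s) {B C : Mat2} (hB : IsUnit B) (hC : IsUnit C) :
    svf s (B * C) ≤ svf s B * svf s C := by
  rw [svf_eq _ s hs (hB.mul hC), svf_eq _ s hs hB, svf_eq _ s hs hC]
  have hdB : (0:ℝ) < |B.det| := abs_pos.2 (((Matrix.isUnit_iff_isUnit_det B).1 hB).ne_zero)
  have hdC : (0:ℝ) < |C.det| := abs_pos.2 (((Matrix.isUnit_iff_isUnit_det C).1 hC).ne_zero)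
  have hnB : 0 < opNorm B := opNorm_pos B hB
  have hnC : 0 < opNorm C := opNorm_pos C hC
  have hdet : |(B * C).det| = |B.det| * |C.det| := by rw [Matrix.det_mul, abs_mul]
  have h1 : opNorm (B * C) ^ aE s ≤ (opNorm B * opNorm C) ^ aE s :=
    Real.rpow_le_rpow (by rw [opNorm]; exact norm_nonneg _) (opNorm_mul_le B C) (aE_nonneg s)
  rw [hdet, Real.mul_rpow hdB.le hdC.le]
  calc opNorm (B * C) ^ aE s * (|B.det| ^ bE s * |C.det| ^ bE s)
      ≤ (opNorm B * opNorm C) ^ aE s * (|B.det| ^ bE s * |C.det| ^ bE s) := by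
        apply mul_le_mul_of_nonneg_right h1
        positivity
    _ = opNorm B ^ aE s * |B.det| ^ bE s * (opNorm C ^ aE s * |C.det| ^ bE s) := by
        rw [Real.mul_rpow hnB.le hnC.le]; ring

theorem svf_ge (A : Mat2) (s : ℝ) (hs : 0 < s) (hA : IsUnit A) :
    |A.det| ^ (s / 2) ≤ svf s A := by
  rw [svf_eq A s hs hA]
  have hd : (0:ℝ) < |A.det| := abs_pos.2 (((Matrix.isUnit_iff_isUnit_det A).1 hA).ne_zero)
  have hn : 0 < opNorm A := opNorm_pos A hA
  have hkey : |A.det| ^ ((1:ℝ)/2) ≤ opNorm A := by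
    have h := absdet_le_opNorm_sq A
    calc |A.det| ^ ((1:ℝ)/2) ≤ (opNorm A ^ 2) ^ ((1:ℝ)/2) :=
          Real.rpow_le_rpow hd.le h (by norm_num)
      _ = opNorm A := by
          rw [← Real.rpow_natCast (opNorm A) 2, ← Real.rpow_mul hn.le]
          norm_num
  have h1 : (|A.det| ^ ((1:ℝ)/2)) ^ aE s ≤ opNorm A ^ aE s :=
    Real.rpow_le_rpow (Real.rpow_nonneg hd.le _) hkey (aE_nonneg s)
  calc |A.det| ^ (s/2) = |A.det| ^ ((1/2) * aE s + bE s) := by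
        rw [show (1/2) * aE s + bE s = aE s / 2 + bE s by ring, aE_bE s hs]
    _ = (|A.det| ^ ((1:ℝ)/2)) ^ aE s * |A.det| ^ bE s := by
        rw [Real.rpow_add hd, ← Real.rpow_mul hd.le]
    _ ≤ opNorm A ^ aE s * |A.det| ^ bE s :=
        mul_le_mul_of_nonneg_right h1 (Real.rpow_nonneg hd.le _)

section Words

theorem wordProd_isUnit {n : ℕ} {A : Fin 2 → Mat2} (hA : ∀ i, IsUnit (A i))
    (w : Fin n → Fin 2) : IsUnit (wordProd A w) := by
  apply List.prod_isUnit
  intro m hm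
  rw [List.mem_ofFn] at hm
  obtain ⟨j, rfl⟩ := hm
  exact hA _

theorem wordProd_append {m n : ℕ} (A : Fin 2 → Mat2) (u : Fin m → Fin 2) (v : Fin n → Fin 2) :
    wordProd A (Fin.append u v) = wordProd A u * wordProd A v := by
  rw [wordProd, List.ofFn_add, List.prod_append]
  congr 1
  · rw [wordProd]
    refine congrArg List.prod (congrArg List.ofFn (funext fun i => ?_))
    exact congrArg A (Fin.append_left u v i)
  · rw [wordProd]
    refine congrArg List.prod (congrArg List.ofFn (funext fun i => ?_))
    rw [Fin.append_right]

theorem absdet_wordProd {n : ℕ} (A : Fin 2 → Mat2) (w : Fin n → Fin 2) :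
    |(wordProd A w).det| = ∏ j : Fin n, |(A (w j)).det| := by
  have h : (wordProd A w).det = ((List.ofFn fun j => A (w j)).map Matrix.det).prod := by
    rw [wordProd, ← Matrix.coe_detMonoidHom, map_list_prod]
  rw [h, List.map_ofFn, List.prod_ofFn, ← Finset.abs_prod]
  simp [Function.comp]

end Words


set_option maxHeartbeats 1000000 in
/-- Existence (and finiteness) of the limit defining `R_q(A₁,A₂,p,s)`. -/
theorem stmt3 (A₁ A₂ : Mat2) (h1 : IsUnit A₁) (h2 : IsUnit A₂)
    (hn1 : opNorm A₁ < 1) (hn2 : opNorm A₂ < 1)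
    (q p s : ℝ) (hq : 1 < q) (hp : p ∈ Set.Ioo (0 : ℝ) 1) (hs : 0 < s) :
    ∃ L : ℝ, Filter.Tendsto (fun n : ℕ => (1 / (n : ℝ)) * Real.log (Zsum ![A₁, A₂] p q s n))
      Filter.atTop (𝓝 L) := by
  set A : Fin 2 → Mat2 := ![A₁, A₂] with hAdef
  have hAu : ∀ i, IsUnit (A i) := by
    intro i; fin_cases i
    · simpa [hAdef] using h1
    · simpa [hAdef] using h2
  have hpv0 : pvec p 0 = p := rfl
  have hpv1 : pvec p 1 = 1 - p := rfl
  have hpv_pos : ∀ i : Fin 2, 0 < pvec p i := by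
    intro i
    fin_cases i
    · exact hpv0 ▸ hp.1
    · rw [show (⟨1, by norm_num⟩ : Fin 2) = 1 from rfl, hpv1]; linarith [hp.2]
  have hpv_le : ∀ i : Fin 2, pvec p i ≤ 1 := by
    intro i
    fin_cases i
    · rw [show (⟨0, by norm_num⟩ : Fin 2) = 0 from rfl, hpv0]; linarith [hp.2]
    · rw [show (⟨1, by norm_num⟩ : Fin 2) = 1 from rfl, hpv1]; linarith [hp.1]
  have hZpos : ∀ n : ℕ, 0 < Zsum A p q s n := by
    intro n
    rw [Zsum]
    apply Finset.sum_pos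
    · intro w _
      refine mul_pos (Real.rpow_pos_of_pos (svf_pos _ s hs (wordProd_isUnit hAu w)) _) ?_
      exact Finset.prod_pos fun j _ => Real.rpow_pos_of_pos (hpv_pos _) _
    · exact Finset.univ_nonempty
  have hZsuper : ∀ m n : ℕ, Zsum A p q s m * Zsum A p q s n ≤ Zsum A p q s (m + n) := by
    intro m n
    have key : ∀ (u : Fin m → Fin 2) (v : Fin n → Fin 2),
        (svf s (wordProd A u) ^ (1-q) * ∏ j : Fin m, pvec p (u j) ^ q) *
        (svf s (wordProd A v) ^ (1-q) * ∏ j : Fin n, pvec p (v j) ^ q) ≤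
        svf s (wordProd A (Fin.append u v)) ^ (1-q) *
          ∏ j : Fin (m+n), pvec p (Fin.append u v j) ^ q := by
      intro u v
      have hu : IsUnit (wordProd A u) := wordProd_isUnit hAu u
      have hv : IsUnit (wordProd A v) := wordProd_isUnit hAu v
      have hπ : (∏ j : Fin (m+n), pvec p (Fin.append u v j) ^ q) =
          (∏ j : Fin m, pvec p (u j) ^ q) * ∏ j : Fin n, pvec p (v j) ^ q := by
        rw [Fin.prod_univ_add]
        congr 1
        · exact Finset.prod_congr rfl fun j _ => by rw [Fin.append_left]
        · exact Finset.prod_congr rfl fun j _ => by rw [Fin.append_right]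
      have hsvf : svf s (wordProd A u) ^ (1-q) * svf s (wordProd A v) ^ (1-q) ≤
          svf s (wordProd A (Fin.append u v)) ^ (1-q) := by
        rw [← Real.mul_rpow (svf_pos _ s hs hu).le (svf_pos _ s hs hv).le, wordProd_append]
        exact Real.rpow_le_rpow_of_nonpos
          (svf_pos _ s hs (hu.mul hv)) (svf_submul s hs hu hv) (by linarith)
      have hπu : (0:ℝ) ≤ ∏ j : Fin m, pvec p (u j) ^ q :=
        Finset.prod_nonneg fun j _ => Real.rpow_nonneg (hpv_pos _).le _
      have hπv : (0:ℝ) ≤ ∏ j : Fin n, pvec p (v j) ^ q :=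
        Finset.prod_nonneg fun j _ => Real.rpow_nonneg (hpv_pos _).le _
      rw [hπ]
      calc (svf s (wordProd A u) ^ (1-q) * ∏ j : Fin m, pvec p (u j) ^ q) *
            (svf s (wordProd A v) ^ (1-q) * ∏ j : Fin n, pvec p (v j) ^ q)
          = (svf s (wordProd A u) ^ (1-q) * svf s (wordProd A v) ^ (1-q)) *
            ((∏ j : Fin m, pvec p (u j) ^ q) * ∏ j : Fin n, pvec p (v j) ^ q) := by ring
        _ ≤ svf s (wordProd A (Fin.append u v)) ^ (1-q) *
            ((∏ j : Fin m, pvec p (u j) ^ q) * ∏ j : Fin n, pvec p (v j) ^ q) :=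
            mul_le_mul_of_nonneg_right hsvf (mul_nonneg hπu hπv)
    calc Zsum A p q s m * Zsum A p q s n
        = ∑ u : Fin m → Fin 2, ∑ v : Fin n → Fin 2,
            (svf s (wordProd A u) ^ (1-q) * ∏ j : Fin m, pvec p (u j) ^ q) *
            (svf s (wordProd A v) ^ (1-q) * ∏ j : Fin n, pvec p (v j) ^ q) := by
          rw [Zsum, Zsum, Finset.sum_mul_sum]
      _ ≤ ∑ u : Fin m → Fin 2, ∑ v : Fin n → Fin 2,
            svf s (wordProd A (Fin.append u v)) ^ (1-q) *
            ∏ j : Fin (m+n), pvec p (Fin.append u v j) ^ q :=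
          Finset.sum_le_sum fun u _ => Finset.sum_le_sum fun v _ => key u v
      _ = ∑ uv : (Fin m → Fin 2) × (Fin n → Fin 2),
            svf s (wordProd A (Fin.appendEquiv m n uv)) ^ (1-q) *
            ∏ j : Fin (m+n), pvec p (Fin.appendEquiv m n uv j) ^ q := by
          rw [Fintype.sum_prod_type]
          rfl
      _ = ∑ w : Fin (m+n) → Fin 2,
            svf s (wordProd A w) ^ (1-q) * ∏ j : Fin (m+n), pvec p (w j) ^ q :=
          Equiv.sum_comp (Fin.appendEquiv m n)
            (fun w => svf s (wordProd A w) ^ (1-q) * ∏ j : Fin (m+n), pvec p (w j) ^ q)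
      _ = Zsum A p q s (m+n) := by rw [Zsum]
  have hd1 : (0:ℝ) < |A₁.det| := abs_pos.2 (((Matrix.isUnit_iff_isUnit_det A₁).1 h1).ne_zero)
  have hd2 : (0:ℝ) < |A₂.det| := abs_pos.2 (((Matrix.isUnit_iff_isUnit_det A₂).1 h2).ne_zero)
  set m' : ℝ := min (min |A₁.det| |A₂.det|) 1 with hm'def
  have hm'pos : 0 < m' := lt_min (lt_min hd1 hd2) one_pos
  have hm'det : ∀ i : Fin 2, m' ≤ |(A i).det| := by
    intro i; fin_cases i
    · simp only [hAdef, Matrix.cons_val_zero]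
      exact le_trans (min_le_left _ _) (min_le_left _ _)
    · simp only [hAdef, Matrix.cons_val_one, Matrix.head_cons]
      exact le_trans (min_le_left _ _) (min_le_right _ _)
  have hdet_lb : ∀ (n : ℕ) (w : Fin n → Fin 2), m' ^ n ≤ |(wordProd A w).det| := by
    intro n w
    rw [absdet_wordProd]
    calc m' ^ n = ∏ _j : Fin n, m' := by
          rw [Finset.prod_const, Finset.card_univ, Fintype.card_fin]
      _ ≤ ∏ j : Fin n, |(A (w j)).det| :=
          Finset.prod_le_prod (fun _ _ => hm'pos.le) (fun j _ => hm'det _)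
  set c : ℝ := (s/2) * (1 - q) * Real.log m' with hcdef
  have hlogZ : ∀ n : ℕ, Real.log (Zsum A p q s n) ≤ n * (Real.log 2 + c) := by
    intro n
    have hterm : ∀ w : Fin n → Fin 2,
        svf s (wordProd A w) ^ (1-q) * (∏ j : Fin n, pvec p (w j) ^ q) ≤
          Real.exp ((n:ℝ) * c) := by
      intro w
      have hu := wordProd_isUnit hAu w
      have hlow : ((m':ℝ)^n) ^ (s/2 : ℝ) ≤ svf s (wordProd A w) :=
        le_trans (Real.rpow_le_rpow (by positivity) (hdet_lb n w) (by positivity))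
          (svf_ge _ s hs hu)
      have hlowpos : (0:ℝ) < ((m':ℝ)^n) ^ (s/2:ℝ) := Real.rpow_pos_of_pos (by positivity) _
      have h2' : svf s (wordProd A w) ^ (1-q) ≤ (((m':ℝ)^n) ^ (s/2:ℝ)) ^ (1-q) :=
        Real.rpow_le_rpow_of_nonpos hlowpos hlow (by linarith)
      have h3' : (((m':ℝ)^n) ^ (s/2:ℝ)) ^ (1-q) = Real.exp ((n:ℝ) * c) := by
        rw [← Real.rpow_natCast m' n, ← Real.rpow_mul hm'pos.le, ← Real.rpow_mul hm'pos.le,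
          Real.rpow_def_of_pos hm'pos]
        congr 1
        rw [hcdef]; ring
      have hπ : (∏ j : Fin n, pvec p (w j) ^ q) ≤ 1 :=
        Finset.prod_le_one (fun j _ => Real.rpow_nonneg (hpv_pos _).le _)
          (fun j _ => Real.rpow_le_one (hpv_pos _).le (hpv_le _) (by linarith))
      have hπnn : (0:ℝ) ≤ ∏ j : Fin n, pvec p (w j) ^ q :=
        Finset.prod_nonneg fun j _ => Real.rpow_nonneg (hpv_pos _).le _
      calc svf s (wordProd A w) ^ (1-q) * (∏ j : Fin n, pvec p (w j) ^ q)
          ≤ svf s (wordProd A w) ^ (1-q) * 1 :=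
            mul_le_mul_of_nonneg_left hπ (Real.rpow_nonneg (svf_pos _ s hs hu).le _)
        _ = svf s (wordProd A w) ^ (1-q) := mul_one _
        _ ≤ Real.exp ((n:ℝ)*c) := h2'.trans_eq h3'
    have hcard : (Fintype.card (Fin n → Fin 2) : ℝ) = 2^n := by
      simp [Fintype.card_fun]
    have hsum : Zsum A p q s n ≤ (2:ℝ)^n * Real.exp ((n:ℝ)*c) := by
      rw [Zsum]
      calc (∑ w : Fin n → Fin 2, svf s (wordProd A w) ^ (1-q) *
              ∏ j : Fin n, pvec p (w j) ^ q)
          ≤ ∑ _w : Fin n → Fin 2, Real.exp ((n:ℝ)*c) :=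
            Finset.sum_le_sum fun w _ => hterm w
        _ = (Fintype.card (Fin n → Fin 2) : ℝ) * Real.exp ((n:ℝ)*c) := by
            rw [Finset.sum_const, Finset.card_univ, nsmul_eq_mul]
        _ = (2:ℝ)^n * Real.exp ((n:ℝ)*c) := by rw [hcard]
    calc Real.log (Zsum A p q s n)
        ≤ Real.log ((2:ℝ)^n * Real.exp ((n:ℝ)*c)) := Real.log_le_log (hZpos n) hsum
      _ = n * Real.log 2 + (n:ℝ)*c := by
          rw [Real.log_mul (by positivity) (Real.exp_ne_zero _), Real.log_pow, Real.log_exp]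
      _ = n * (Real.log 2 + c) := by ring
  set u : ℕ → ℝ := fun n => - Real.log (Zsum A p q s n) with hudef
  have hsub : Subadditive u := by
    intro a b
    have hab := Real.log_le_log (mul_pos (hZpos a) (hZpos b)) (hZsuper a b)
    rw [Real.log_mul (hZpos a).ne' (hZpos b).ne'] at hab
    simp only [hudef]
    linarith
  have hbdd : BddBelow (Set.range fun n : ℕ => u n / n) := by
    refine ⟨min 0 (-(Real.log 2 + c)), ?_⟩
    rintro x ⟨n, rfl⟩
    rcases Nat.eq_zero_or_pos n with rfl | hn
    · simp
    · have hn' : (0:ℝ) < n := by exact_mod_cast hn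
      have hdiv : Real.log (Zsum A p q s n) / n ≤ Real.log 2 + c := by
        rw [div_le_iff₀ hn']
        calc Real.log (Zsum A p q s n) ≤ n * (Real.log 2 + c) := hlogZ n
          _ = (Real.log 2 + c) * n := by ring
      have hfin : -(Real.log 2 + c) ≤ u n / n := by
        simp only [hudef, neg_div]
        linarith
      exact le_trans (min_le_right _ _) hfin
  refine ⟨-hsub.lim, ?_⟩
  have ht := (hsub.tendsto_lim hbdd).neg
  have heq : (fun n : ℕ => -(u n / n)) =
      fun n : ℕ => (1/(n:ℝ)) * Real.log (Zsum A p q s n) := by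
    funext n
    simp only [hudef]
    rw [neg_div, neg_neg, one_div, inv_mul_eq_div]
  rw [← heq]
  exact ht

end
end

section
/- Let A₁, A₂ be invertible 2×2 real matrices with ‖A₁‖ < 1 and ‖A₂‖ < 1, let q > 1 and p ∈ (0,1). Then the function s ↦ R_q(A₁, A₂, p, s) is strictly increasing on (0, +∞); indeed, writing θ := max{‖A₁‖, ‖A₂‖}, for all s, t > 0 one has R_q(A₁, A₂, p, s+t) ≥ (1−q)·t·log θ + R_q(A₁, A₂, p, s) > R_q(A₁, A₂, p, s). -/
open MeasureTheory Filter Topology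

noncomputable section

/-! ### Auxiliary development for Statement 4 -/

section Stmt4Aux
open Matrix
open scoped Matrix.Norms.L2Operator

namespace Stmt4Aux

/-! #### Singular value basics -/

lemma sv_apply (B : Mat2) (j : Fin 2) : singularValues B j =
    Real.sqrt ((Matrix.isHermitian_conjTranspose_mul_self B).eigenvalues
      (Tuple.sort (fun i => Real.sqrt ((Matrix.isHermitian_conjTranspose_mul_self B).eigenvalues i))
        (Fin.rev j))) := rfl

lemma sv_nonneg (B : Mat2) (j : Fin 2) : 0 ≤ singularValues B j := Real.sqrt_nonneg _

lemma sv_le (B : Mat2) : singularValues B 1 ≤ singularValues B 0 := by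
  have h := Tuple.monotone_sort
    (fun i => Real.sqrt ((Matrix.isHermitian_conjTranspose_mul_self B).eigenvalues i))
    (show (0 : Fin 2) ≤ 1 by decide)
  simpa [sv_apply, Fin.rev] using h

lemma sv_prod (B : Mat2) : singularValues B 0 * singularValues B 1 = |B.det| := by
  classical
  set hM := Matrix.isHermitian_conjTranspose_mul_self B with hhM
  set g : Fin 2 → ℝ := fun i => Real.sqrt (hM.eigenvalues i) with hg
  set σ := Tuple.sort g with hσ
  have h1 : singularValues B 0 * singularValues B 1 = g (σ 1) * g (σ 0) := rfl
  have h2 : g (σ 1) * g (σ 0) = ∏ i : Fin 2, g (σ i) := by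
    rw [Fin.prod_univ_two, mul_comm]
  have h3 : ∏ i : Fin 2, g (σ i) = ∏ i : Fin 2, g i := Equiv.prod_comp σ g
  have h4 : ∏ i : Fin 2, g i = Real.sqrt (∏ i : Fin 2, hM.eigenvalues i) := by
    rw [Fin.prod_univ_two, Fin.prod_univ_two, hg,
      Real.sqrt_mul (Matrix.eigenvalues_conjTranspose_mul_self_nonneg B 0)]
  have h5 : ∏ i : Fin 2, hM.eigenvalues i = (Bᴴ * B).det := by
    rw [hM.det_eq_prod_eigenvalues]; norm_num
  rw [h1, h2, h3, h4, h5]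
  rw [Matrix.det_mul, Matrix.det_conjTranspose]
  simp [← Real.sqrt_sq_eq_abs, sq]

/-! #### The operator norm equals the top singular value -/

lemma diag_norm_le (v : Fin 2 → ℝ) : ‖(Matrix.diagonal v : Mat2)‖ ≤ max |v 0| |v 1| := by
  rw [Matrix.cstar_norm_def]
  apply ContinuousLinearMap.opNorm_le_bound _ (le_max_iff.2 (Or.inl (abs_nonneg _)))
  intro x
  have hx : ∀ i, (Matrix.toEuclideanCLM (𝕜 := ℝ) (Matrix.diagonal v) x) i = v i * x i := by
    intro i
    show (Matrix.diagonal v *ᵥ (WithLp.equiv _ _ x)) i = _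
    simp [Matrix.mulVec_diagonal]
  rw [EuclideanSpace.norm_eq, EuclideanSpace.norm_eq]
  set c := max |v 0| |v 1| with hc
  have hc0 : 0 ≤ c := le_max_iff.2 (Or.inl (abs_nonneg _))
  calc Real.sqrt (∑ i, ‖(Matrix.toEuclideanCLM (𝕜 := ℝ) (Matrix.diagonal v) x) i‖ ^ 2)
      ≤ Real.sqrt (∑ i, c ^ 2 * ‖x i‖ ^ 2) := by
        apply Real.sqrt_le_sqrt
        apply Finset.sum_le_sum
        intro i _
        rw [hx i]
        have h1 : |v i| ≤ c := by
          fin_cases i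
          · exact le_max_left _ _
          · exact le_max_right _ _
        have : ‖v i * x i‖ = |v i| * ‖x i‖ := by
          simp [abs_mul, Real.norm_eq_abs]
        rw [this, mul_pow]
        apply mul_le_mul_of_nonneg_right _ (sq_nonneg _)
        exact pow_le_pow_left₀ (abs_nonneg _) h1 2
      _ = c * Real.sqrt (∑ i, ‖x i‖ ^ 2) := by
        rw [← Finset.mul_sum, Real.sqrt_mul (sq_nonneg c), Real.sqrt_sq hc0]

lemma eig_le_norm (M : Mat2) (hM : M.IsHermitian) (i : Fin 2) :
    |hM.eigenvalues i| ≤ ‖M‖ := by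
  have hb : ‖(hM.eigenvectorBasis i : EuclideanSpace ℝ (Fin 2))‖ = 1 :=
    hM.eigenvectorBasis.orthonormal.1 i
  have happ : Matrix.toEuclideanCLM (𝕜 := ℝ) M (hM.eigenvectorBasis i)
      = hM.eigenvalues i • (hM.eigenvectorBasis i : EuclideanSpace ℝ (Fin 2)) := by
    apply (WithLp.equiv 2 _).injective
    ext j
    exact congrFun (hM.mulVec_eigenvectorBasis i) j
  have := (Matrix.toEuclideanCLM (𝕜 := ℝ) M).le_opNorm (hM.eigenvectorBasis i)
  rw [happ, norm_smul, hb, mul_one, Real.norm_eq_abs] at this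
  rw [Matrix.cstar_norm_def]
  simpa using this

lemma norm_herm (M : Mat2) (hM : M.IsHermitian) :
    ‖M‖ = max |hM.eigenvalues 0| |hM.eigenvalues 1| := by
  refine le_antisymm ?_ (max_le (eig_le_norm M hM 0) (eig_le_norm M hM 1))
  calc ‖M‖ = ‖(hM.eigenvectorUnitary : Mat2) * (Matrix.diagonal (RCLike.ofReal ∘ hM.eigenvalues)
        * star (hM.eigenvectorUnitary : Mat2))‖ := by
        conv_lhs => rw [hM.spectral_theorem]
        rw [Unitary.conjStarAlgAut_apply, mul_assoc]
    _ = ‖Matrix.diagonal (RCLike.ofReal ∘ hM.eigenvalues) * star (hM.eigenvectorUnitary : Mat2)‖ :=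
        CStarRing.norm_coe_unitary_mul _ _
    _ = ‖Matrix.diagonal (RCLike.ofReal ∘ hM.eigenvalues)‖ :=
        CStarRing.norm_mul_mem_unitary _ (Unitary.star_mem (hM.eigenvectorUnitary).2)
    _ ≤ _ := by
        have : Matrix.diagonal (RCLike.ofReal ∘ hM.eigenvalues)
            = Matrix.diagonal hM.eigenvalues := by congr 1
        rw [this]
        simpa using diag_norm_le hM.eigenvalues

lemma opNorm_eq (B : Mat2) : opNorm B = ‖B‖ := (Matrix.cstar_norm_def B).symm

lemma opNorm_eq_sv0 (B : Mat2) : opNorm B = singularValues B 0 := by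
  classical
  set hM := Matrix.isHermitian_conjTranspose_mul_self B with hhM
  set g : Fin 2 → ℝ := fun i => Real.sqrt (hM.eigenvalues i) with hg
  set σ := Tuple.sort g with hσ
  have hmem : singularValues B 0 = g (σ 1) := rfl
  have hub : ∀ i : Fin 2, g i ≤ singularValues B 0 := by
    intro i
    have h0 : i = σ (σ.symm i) := (σ.apply_symm_apply i).symm
    have : σ.symm i = 0 ∨ σ.symm i = 1 := by omega
    rcases this with h | h
    · rw [h0, h]
      have := sv_le B
      rw [hmem]
      exact this
    · rw [h0, h, hmem]
  have hmax : singularValues B 0 = max (g 0) (g 1) := by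
    refine le_antisymm ?_ (max_le (hub 0) (hub 1))
    rw [hmem]
    have : σ 1 = 0 ∨ σ 1 = 1 := by omega
    rcases this with h | h
    · rw [h]; exact le_max_left _ _
    · rw [h]; exact le_max_right _ _
  have hB2 : ‖B‖ * ‖B‖ = max (hM.eigenvalues 0) (hM.eigenvalues 1) := by
    rw [← Matrix.l2_opNorm_conjTranspose_mul_self, norm_herm _ hM,
      abs_of_nonneg (Matrix.eigenvalues_conjTranspose_mul_self_nonneg B 0),
      abs_of_nonneg (Matrix.eigenvalues_conjTranspose_mul_self_nonneg B 1)]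
  have hsq : Monotone Real.sqrt := fun _ _ h => Real.sqrt_le_sqrt h
  have : opNorm B = ‖B‖ := (Matrix.cstar_norm_def B).symm
  rw [this, ← Real.sqrt_mul_self (norm_nonneg B), hB2, hsq.map_max, hmax]

/-! #### The auxiliary function `phi` and the formula for `svf` -/

/-- Explicit form of the singular value function in dimension 2. -/
noncomputable def phi (u v s : ℝ) : ℝ :=
  if s < 1 then u ^ s else if s < 2 then u * v ^ (s - 1) else (u * v) ^ (s / 2)

private lemma rpow_split {x : ℝ} (hx : 0 < x) {a : ℝ} (b c : ℝ) (h : a = b + c) :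
    x ^ a = x ^ b * x ^ c := by rw [h, Real.rpow_add hx]

variable {u v s t : ℝ}

lemma phi_of_lt_one (h : s < 1) : phi u v s = u ^ s := if_pos h
lemma phi_of_one_le (h1 : 1 ≤ s) (h2 : s < 2) : phi u v s = u * v ^ (s - 1) := by
  rw [phi, if_neg h1.not_gt, if_pos h2]
lemma phi_of_two_le (h : 2 ≤ s) : phi u v s = (u * v) ^ (s / 2) := by
  rw [phi, if_neg (by linarith), if_neg h.not_gt]

lemma svf_eq_phi (B : Mat2) {s : ℝ} (hs : 0 < s) :
    svf s B = phi (singularValues B 0) (singularValues B 1) s := by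
  rw [svf, phi]
  rcases lt_or_ge s 1 with h1 | h1
  · rw [if_neg (by push_cast; nlinarith), if_pos h1]
    have hf : ⌊s⌋₊ = 0 := Nat.floor_eq_zero.2 h1
    rw [Fin.prod_univ_two]
    simp [hf]
  · rw [if_neg h1.not_gt]
    rcases lt_or_ge s 2 with h2 | h2
    · rw [if_neg (by push_cast; nlinarith), if_pos h2]
      have hf : ⌊s⌋₊ = 1 := by
        rw [Nat.floor_eq_iff (by positivity)]
        constructor <;> push_cast <;> linarith
      rw [Fin.prod_univ_two]
      simp [hf]
    · rw [if_pos (by push_cast; linarith), if_neg (by linarith)]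
      rw [← sv_prod B]
      norm_num

lemma phi_ge (hv : 0 < v) (hvu : v ≤ u) (hs : 0 < s) : v ^ s ≤ phi u v s := by
  have hu : 0 < u := lt_of_lt_of_le hv hvu
  rcases lt_or_ge s 1 with h1 | h1
  · rw [phi_of_lt_one h1]; exact Real.rpow_le_rpow hv.le hvu hs.le
  rcases lt_or_ge s 2 with h2 | h2
  · rw [phi_of_one_le h1 h2, rpow_split hv 1 (s-1) (by ring), Real.rpow_one]
    exact mul_le_mul_of_nonneg_right hvu (Real.rpow_nonneg hv.le _)
  · rw [phi_of_two_le h2, rpow_split hv (s/2) (s/2) (by ring),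
      ← Real.mul_rpow hv.le hv.le]
    exact Real.rpow_le_rpow (by positivity) (mul_le_mul_of_nonneg_right hvu hv.le) (by linarith)

lemma phi_pos (hv : 0 < v) (hvu : v ≤ u) (hs : 0 < s) : 0 < phi u v s :=
  lt_of_lt_of_le (Real.rpow_pos_of_pos hv s) (phi_ge hv hvu hs)

lemma phi_mono (hv : 0 < v) (hvu : v ≤ u) (hs : 0 < s) (ht : 0 < t) :
    phi u v (s + t) ≤ phi u v s * u ^ t := by
  have hu : 0 < u := lt_of_lt_of_le hv hvu
  have hvv : (0:ℝ) ≤ v := hv.le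
  have huu : (0:ℝ) ≤ u := hu.le
  rcases lt_or_ge s 1 with h1 | h1
  · rw [phi_of_lt_one h1]
    rcases lt_or_ge (s+t) 1 with g1 | g1
    · rw [phi_of_lt_one g1, rpow_split hu s t rfl]
    rcases lt_or_ge (s+t) 2 with g2 | g2
    · rw [phi_of_one_le g1 g2]
      calc u * v ^ (s + t - 1) ≤ u * u ^ (s + t - 1) :=
            mul_le_mul_of_nonneg_left (Real.rpow_le_rpow hvv hvu (by linarith)) huu
        _ = u ^ s * u ^ t := by
            rw [← Real.rpow_add hu s t]
            nth_rewrite 1 [← Real.rpow_one u]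
            rw [← Real.rpow_add hu]
            ring_nf
    · rw [phi_of_two_le g2]
      calc (u * v) ^ ((s + t) / 2) ≤ (u * u) ^ ((s + t) / 2) :=
            Real.rpow_le_rpow (by positivity) (mul_le_mul_of_nonneg_left hvu huu) (by linarith)
        _ = u ^ s * u ^ t := by
            rw [Real.mul_rpow huu huu, ← Real.rpow_add hu, ← Real.rpow_add hu]
            ring_nf
  rcases lt_or_ge s 2 with h2 | h2
  · rw [phi_of_one_le h1 h2]
    rcases lt_or_ge (s+t) 2 with g2 | g2
    · rw [phi_of_one_le (by linarith) g2, rpow_split hv (s-1) t (by ring)]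
      calc u * (v ^ (s - 1) * v ^ t) = u * v ^ (s - 1) * v ^ t := by ring
        _ ≤ u * v ^ (s - 1) * u ^ t := by
            apply mul_le_mul_of_nonneg_left (Real.rpow_le_rpow hvv hvu ht.le)
            positivity
    · rw [phi_of_two_le g2, Real.mul_rpow huu hvv]
      have hv1 : v ^ ((s + t) / 2) ≤ v ^ (s - 1) * u ^ ((s + t) / 2 - (s - 1)) := by
        rw [rpow_split hv (s-1) ((s+t)/2 - (s-1)) (by ring)]
        exact mul_le_mul_of_nonneg_left
          (Real.rpow_le_rpow hvv hvu (by linarith)) (by positivity)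
      calc u ^ ((s + t) / 2) * v ^ ((s + t) / 2)
          ≤ u ^ ((s + t) / 2) * (v ^ (s - 1) * u ^ ((s + t) / 2 - (s - 1))) :=
            mul_le_mul_of_nonneg_left hv1 (by positivity)
        _ = u * v ^ (s - 1) * u ^ t := by
            rw [mul_comm (v ^ (s-1)) _, ← mul_assoc, ← Real.rpow_add hu,
              show (s + t) / 2 + ((s + t) / 2 - (s - 1)) = 1 + t by ring,
              Real.rpow_add hu, Real.rpow_one]
            ring
  · rw [phi_of_two_le h2, phi_of_two_le (by linarith)]
    rw [rpow_split (show (0:ℝ) < u * v by positivity) (s/2) (t/2) (by ring)]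
    apply mul_le_mul_of_nonneg_left _ (by positivity)
    calc (u * v) ^ (t / 2) ≤ (u * u) ^ (t / 2) :=
          Real.rpow_le_rpow (by positivity) (mul_le_mul_of_nonneg_left hvu huu) (by positivity)
      _ = u ^ t := by
          rw [Real.mul_rpow huu huu, ← Real.rpow_add hu]
          norm_num

lemma phi_submul {u1 v1 u2 v2 : ℝ} (hv : 0 < v) (hvu : v ≤ u)
    (hv1 : 0 < v1) (hvu1 : v1 ≤ u1) (hv2 : 0 < v2) (hvu2 : v2 ≤ u2)
    (hs : 0 < s) (hU : u ≤ u1 * u2) (hD : u * v = u1 * v1 * (u2 * v2)) :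
    phi u v s ≤ phi u1 v1 s * phi u2 v2 s := by
  have hu : 0 < u := lt_of_lt_of_le hv hvu
  have hu1 : 0 < u1 := lt_of_lt_of_le hv1 hvu1
  have hu2 : 0 < u2 := lt_of_lt_of_le hv2 hvu2
  rcases lt_or_ge s 1 with h1 | h1
  · rw [phi_of_lt_one h1, phi_of_lt_one h1, phi_of_lt_one h1,
      ← Real.mul_rpow hu1.le hu2.le]
    exact Real.rpow_le_rpow hu.le hU hs.le
  rcases lt_or_ge s 2 with h2 | h2
  · rw [phi_of_one_le h1 h2, phi_of_one_le h1 h2, phi_of_one_le h1 h2]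
    have key : ∀ x y : ℝ, 0 < x → 0 < y → x * y ^ (s-1) = x ^ (2-s) * (x*y) ^ (s-1) := by
      intro x y hx hy
      rw [Real.mul_rpow hx.le hy.le, ← mul_assoc, ← Real.rpow_add hx,
        show 2 - s + (s - 1) = 1 by ring, Real.rpow_one]
    rw [key u v hu hv, key u1 v1 hu1 hv1, key u2 v2 hu2 hv2]
    calc u ^ (2-s) * (u*v) ^ (s-1) ≤ (u1*u2) ^ (2-s) * (u*v) ^ (s-1) :=
          mul_le_mul_of_nonneg_right (Real.rpow_le_rpow hu.le hU (by linarith))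
            (Real.rpow_nonneg (by positivity) _)
      _ = u1 ^ (2-s) * (u1*v1) ^ (s-1) * (u2 ^ (2-s) * (u2*v2) ^ (s-1)) := by
          rw [hD, Real.mul_rpow hu1.le hu2.le, Real.mul_rpow (by positivity) (by positivity)]
          ring
  · rw [phi_of_two_le h2, phi_of_two_le h2, phi_of_two_le h2]
    refine le_of_eq ?_
    rw [hD, Real.mul_rpow (by positivity) (by positivity)]

/-! #### Singular-value facts for invertible matrices -/

lemma sv1_pos {B : Mat2} (hB : IsUnit B) : 0 < singularValues B 1 := by
  have hdet : (0:ℝ) < |B.det| := by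
    rw [abs_pos]
    exact (Matrix.isUnit_iff_isUnit_det B).1 hB |>.ne_zero
  nlinarith [sv_nonneg B 0, sv_nonneg B 1, sv_prod B, sv_le B]

lemma svf_pos {B : Mat2} (hB : IsUnit B) (hs : 0 < s) : 0 < svf s B := by
  rw [svf_eq_phi B hs]; exact phi_pos (sv1_pos hB) (sv_le B) hs

lemma svf_submul {B C : Mat2} (hB : IsUnit B) (hC : IsUnit C) (hs : 0 < s) :
    svf s (B * C) ≤ svf s B * svf s C := by
  rw [svf_eq_phi B hs, svf_eq_phi C hs, svf_eq_phi (B*C) hs]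
  apply phi_submul (sv1_pos (hB.mul hC)) (sv_le _) (sv1_pos hB) (sv_le _)
    (sv1_pos hC) (sv_le _) hs
  · rw [← opNorm_eq_sv0, ← opNorm_eq_sv0, ← opNorm_eq_sv0, opNorm_eq, opNorm_eq, opNorm_eq]
    exact norm_mul_le _ _
  · rw [sv_prod, sv_prod, sv_prod, Matrix.det_mul, abs_mul]

lemma svf_mono {B : Mat2} (hB : IsUnit B) (hs : 0 < s) (ht : 0 < t) :
    svf (s + t) B ≤ svf s B * (singularValues B 0) ^ t := by
  rw [svf_eq_phi B hs, svf_eq_phi B (by linarith)]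
  exact phi_mono (sv1_pos hB) (sv_le B) hs ht

lemma svf_ge {B : Mat2} (hB : IsUnit B) (hs : 0 < s) :
    singularValues B 1 ^ s ≤ svf s B := by
  rw [svf_eq_phi B hs]; exact phi_ge (sv1_pos hB) (sv_le B) hs

/-! #### Word products -/

variable {A : Fin 2 → Mat2} {p q : ℝ}

lemma wordProd_zero (A : Fin 2 → Mat2) (w : Fin 0 → Fin 2) : wordProd A w = 1 := by
  simp [wordProd]

lemma wordProd_succ (A : Fin 2 → Mat2) {n : ℕ} (w : Fin (n+1) → Fin 2) :
    wordProd A w = A (w 0) * wordProd A (fun i => w i.succ) := by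
  rw [wordProd, List.ofFn_succ, List.prod_cons]; rfl

lemma isUnit_wordProd (hA : ∀ i, IsUnit (A i)) {n : ℕ} (w : Fin n → Fin 2) :
    IsUnit (wordProd A w) := by
  induction n with
  | zero => rw [wordProd_zero]; exact isUnit_one
  | succ n ih => rw [wordProd_succ]; exact (hA _).mul (ih _)

lemma theta_pos (hA : ∀ i, IsUnit (A i)) : 0 < max (opNorm (A 0)) (opNorm (A 1)) := by
  apply lt_max_of_lt_left
  rw [opNorm_eq, norm_pos_iff]
  exact (hA 0).ne_zero

lemma delta_pos (hA : ∀ i, IsUnit (A i)) : 0 < min |(A 0).det| |(A 1).det| := by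
  apply lt_min <;> rw [abs_pos]
  exacts [((Matrix.isUnit_iff_isUnit_det _).1 (hA 0)).ne_zero,
    ((Matrix.isUnit_iff_isUnit_det _).1 (hA 1)).ne_zero]

lemma opNorm_wordProd_le (A : Fin 2 → Mat2) {n : ℕ} (w : Fin n → Fin 2) :
    opNorm (wordProd A w) ≤ (max (opNorm (A 0)) (opNorm (A 1))) ^ n := by
  set θ := max (opNorm (A 0)) (opNorm (A 1)) with hθ
  have hle : ∀ i, opNorm (A i) ≤ θ := by
    intro i
    have : i = 0 ∨ i = 1 := by omega
    rcases this with h | h <;> rw [h]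
    exacts [le_max_left _ _, le_max_right _ _]
  have hθ0 : 0 ≤ θ := le_trans (norm_nonneg _) (hle 0)
  induction n with
  | zero => rw [wordProd_zero, pow_zero, opNorm_eq, norm_one]
  | succ n ih =>
    rw [wordProd_succ, pow_succ, opNorm_eq]
    calc ‖A (w 0) * wordProd A (fun i => w i.succ)‖
        ≤ ‖A (w 0)‖ * ‖wordProd A (fun i => w i.succ)‖ := norm_mul_le _ _
      _ ≤ θ * θ ^ n := by
          apply mul_le_mul _ _ (norm_nonneg _) hθ0
          · rw [← opNorm_eq]; exact hle _
          · rw [← opNorm_eq]; exact ih _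
      _ = θ ^ n * θ := by ring

lemma det_wordProd_ge (A : Fin 2 → Mat2) {n : ℕ} (w : Fin n → Fin 2) :
    (min |(A 0).det| |(A 1).det|) ^ n ≤ |(wordProd A w).det| := by
  set δ := min |(A 0).det| |(A 1).det| with hδ
  have hle : ∀ i, δ ≤ |(A i).det| := by
    intro i
    have : i = 0 ∨ i = 1 := by omega
    rcases this with h | h <;> rw [h]
    exacts [min_le_left _ _, min_le_right _ _]
  have hδ0 : 0 ≤ δ := le_min (abs_nonneg _) (abs_nonneg _)
  induction n with
  | zero => rw [wordProd_zero, pow_zero]; simp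
  | succ n ih =>
    rw [wordProd_succ, Matrix.det_mul, abs_mul, pow_succ, mul_comm (δ^n) δ]
    exact mul_le_mul (hle _) (ih _) (pow_nonneg hδ0 _) (abs_nonneg _)

lemma sv1_wordProd_ge (hA : ∀ i, IsUnit (A i)) {n : ℕ} (w : Fin n → Fin 2) :
    (min |(A 0).det| |(A 1).det| / max (opNorm (A 0)) (opNorm (A 1))) ^ n
      ≤ singularValues (wordProd A w) 1 := by
  set θ := max (opNorm (A 0)) (opNorm (A 1)) with hθ
  set δ := min |(A 0).det| |(A 1).det| with hδ
  have hθ0 : 0 < θ := theta_pos hA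
  have hδ0 : 0 < δ := delta_pos hA
  set W := wordProd A w with hW
  have h1 : δ ^ n ≤ singularValues W 0 * singularValues W 1 := by
    rw [sv_prod]; exact det_wordProd_ge A w
  have h2 : singularValues W 0 ≤ θ ^ n := by
    rw [← opNorm_eq_sv0]; exact opNorm_wordProd_le A w
  have h3 : 0 < singularValues W 1 := sv1_pos (isUnit_wordProd hA w)
  rw [div_pow, div_le_iff₀ (by positivity)]
  calc δ ^ n ≤ singularValues W 0 * singularValues W 1 := h1
    _ ≤ θ ^ n * singularValues W 1 := mul_le_mul_of_nonneg_right h2 h3.le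
    _ = singularValues W 1 * θ ^ n := by ring

/-! #### `Zsum` estimates -/

lemma pvec_pos (hp : p ∈ Set.Ioo (0:ℝ) 1) (i : Fin 2) : 0 < pvec p i := by
  have : i = 0 ∨ i = 1 := by omega
  rcases this with h | h <;> rw [h] <;> simp [pvec]
  · exact hp.1
  · exact hp.2

/-- the equiv joining two words -/
def joinEquiv (m n : ℕ) : ((Fin m → Fin 2) × (Fin n → Fin 2)) ≃ (Fin (m+n) → Fin 2) :=
  (Equiv.sumArrowEquivProdArrow _ _ _).symm.trans
    (Equiv.arrowCongr finSumFinEquiv (Equiv.refl _))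

lemma joinEquiv_castAdd {m n : ℕ} (w : (Fin m → Fin 2) × (Fin n → Fin 2)) (i : Fin m) :
    joinEquiv m n w (Fin.castAdd n i) = w.1 i := by
  simp [joinEquiv, Equiv.sumArrowEquivProdArrow, Equiv.arrowCongr]

lemma joinEquiv_natAdd {m n : ℕ} (w : (Fin m → Fin 2) × (Fin n → Fin 2)) (j : Fin n) :
    joinEquiv m n w (Fin.natAdd m j) = w.2 j := by
  simp [joinEquiv, Equiv.sumArrowEquivProdArrow, Equiv.arrowCongr]

lemma wordProd_join {m n : ℕ} (A : Fin 2 → Mat2) (w : (Fin m → Fin 2) × (Fin n → Fin 2)) :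
    wordProd A (joinEquiv m n w) = wordProd A w.1 * wordProd A w.2 := by
  have h1 : (fun i : Fin m => A (joinEquiv m n w (Fin.castAdd n i))) = fun i => A (w.1 i) := by
    funext i; rw [joinEquiv_castAdd w i]
  have h2 : (fun j : Fin n => A (joinEquiv m n w (Fin.natAdd m j))) = fun j => A (w.2 j) := by
    funext j; rw [joinEquiv_natAdd w j]
  rw [wordProd, List.ofFn_add, List.prod_append, wordProd, wordProd, h2]
  exact congrArg (fun f => (List.ofFn f).prod * _) h1

variable {s t : ℝ}

lemma Zsum_pos (hA : ∀ i, IsUnit (A i)) (hp : p ∈ Set.Ioo (0:ℝ) 1) (hs : 0 < s) (n : ℕ) :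
    0 < Zsum A p q s n := by
  rw [Zsum]
  apply Finset.sum_pos _ Finset.univ_nonempty
  intro w _
  apply mul_pos
  · exact Real.rpow_pos_of_pos (svf_pos (isUnit_wordProd hA w) hs) _
  · exact Finset.prod_pos fun j _ => Real.rpow_pos_of_pos (pvec_pos hp _) _

lemma Zsum_superadd (hA : ∀ i, IsUnit (A i)) (hp : p ∈ Set.Ioo (0:ℝ) 1) (hq : 1 < q)
    (hs : 0 < s) (m n : ℕ) :
    Zsum A p q s m * Zsum A p q s n ≤ Zsum A p q s (m + n) := by
  rw [Zsum, Zsum, Zsum,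
    ← Equiv.sum_comp (joinEquiv m n)
      (fun w => svf s (wordProd A w) ^ (1-q) * ∏ j, pvec p (w j) ^ q),
    Finset.sum_mul_sum, Fintype.sum_prod_type]
  apply Finset.sum_le_sum
  intro w1 _
  apply Finset.sum_le_sum
  intro w2 _
  have hsplit : (∏ j : Fin (m+n), pvec p (joinEquiv m n (w1, w2) j) ^ q)
      = (∏ j : Fin m, pvec p (w1 j) ^ q) * ∏ j : Fin n, pvec p (w2 j) ^ q := by
    rw [Fin.prod_univ_add]
    congr 1
    · apply Finset.prod_congr rfl; intro i _; rw [joinEquiv_castAdd (w1, w2)]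
    · apply Finset.prod_congr rfl; intro j _; rw [joinEquiv_natAdd (w1, w2)]
  rw [hsplit, wordProd_join]
  have hP : (0:ℝ) ≤ (∏ j : Fin m, pvec p (w1 j) ^ q) * ∏ j : Fin n, pvec p (w2 j) ^ q := by
    apply mul_nonneg <;>
      exact Finset.prod_nonneg fun j _ => (Real.rpow_pos_of_pos (pvec_pos hp _) _).le
  calc svf s (wordProd A w1) ^ (1 - q) * (∏ j : Fin m, pvec p (w1 j) ^ q)
        * (svf s (wordProd A w2) ^ (1 - q) * ∏ j : Fin n, pvec p (w2 j) ^ q)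
      = (svf s (wordProd A w1) * svf s (wordProd A w2)) ^ (1 - q)
        * ((∏ j : Fin m, pvec p (w1 j) ^ q) * ∏ j : Fin n, pvec p (w2 j) ^ q) := by
        rw [Real.mul_rpow (svf_pos (isUnit_wordProd hA w1) hs).le
          (svf_pos (isUnit_wordProd hA w2) hs).le]
        ring
    _ ≤ svf s (wordProd A w1 * wordProd A w2) ^ (1 - q)
        * ((∏ j : Fin m, pvec p (w1 j) ^ q) * ∏ j : Fin n, pvec p (w2 j) ^ q) := by
        apply mul_le_mul_of_nonneg_right _ hP
        apply Real.rpow_le_rpow_of_nonpos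
          (svf_pos ((isUnit_wordProd hA w1).mul (isUnit_wordProd hA w2)) hs)
          (svf_submul (isUnit_wordProd hA w1) (isUnit_wordProd hA w2) hs)
          (by linarith)

lemma sum_pvec_rpow : ∑ i : Fin 2, pvec p i ^ q = p ^ q + (1 - p) ^ q := by
  rw [Fin.sum_univ_two]
  simp [pvec]

lemma Zsum_le (hA : ∀ i, IsUnit (A i)) (hp : p ∈ Set.Ioo (0:ℝ) 1) (hq : 1 < q)
    (hs : 0 < s) (n : ℕ) :
    Zsum A p q s n ≤
      ((min |(A 0).det| |(A 1).det| / max (opNorm (A 0)) (opNorm (A 1))) ^ (s * (1 - q))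
        * (p ^ q + (1 - p) ^ q)) ^ n := by
  set θ := max (opNorm (A 0)) (opNorm (A 1)) with hθ
  set δ := min |(A 0).det| |(A 1).det| with hδ
  set c := δ / θ with hc
  have hc0 : 0 < c := div_pos (delta_pos hA) (theta_pos hA)
  have key : ∀ w : Fin n → Fin 2,
      svf s (wordProd A w) ^ (1 - q) ≤ (c ^ (s * (1 - q))) ^ n := by
    intro w
    have h1 : (c ^ n : ℝ) ^ s ≤ svf s (wordProd A w) := by
      calc (c ^ n : ℝ) ^ s ≤ singularValues (wordProd A w) 1 ^ s :=
            Real.rpow_le_rpow (by positivity) (sv1_wordProd_ge hA w) hs.le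
        _ ≤ _ := svf_ge (isUnit_wordProd hA w) hs
    have h2 : svf s (wordProd A w) ^ (1 - q) ≤ ((c ^ n : ℝ) ^ s) ^ (1 - q) :=
      Real.rpow_le_rpow_of_nonpos (by positivity) h1 (by linarith)
    calc svf s (wordProd A w) ^ (1 - q) ≤ ((c ^ n : ℝ) ^ s) ^ (1 - q) := h2
      _ = (c ^ (s * (1 - q))) ^ n := by
          rw [← Real.rpow_natCast c n, ← Real.rpow_mul hc0.le, ← Real.rpow_mul hc0.le,
            ← Real.rpow_natCast (c ^ (s * (1-q))) n, ← Real.rpow_mul hc0.le]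
          ring_nf
  calc Zsum A p q s n
      ≤ ∑ w : Fin n → Fin 2, (c ^ (s * (1 - q))) ^ n * ∏ j : Fin n, pvec p (w j) ^ q := by
        rw [Zsum]
        apply Finset.sum_le_sum
        intro w _
        exact mul_le_mul_of_nonneg_right (key w)
          (Finset.prod_nonneg fun j _ => (Real.rpow_pos_of_pos (pvec_pos hp _) _).le)
    _ = (c ^ (s * (1 - q))) ^ n * (p ^ q + (1 - p) ^ q) ^ n := by
        rw [← Finset.mul_sum, ← sum_pvec_rpow (p := p) (q := q), Fintype.sum_pow]
    _ = _ := by rw [← mul_pow]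

lemma Zsum_compare (hA : ∀ i, IsUnit (A i)) (hp : p ∈ Set.Ioo (0:ℝ) 1) (hq : 1 < q)
    (hs : 0 < s) (ht : 0 < t) (n : ℕ) :
    ((max (opNorm (A 0)) (opNorm (A 1))) ^ (t * (1 - q))) ^ n * Zsum A p q s n
      ≤ Zsum A p q (s + t) n := by
  set θ := max (opNorm (A 0)) (opNorm (A 1)) with hθ
  have hθ0 : 0 < θ := theta_pos hA
  rw [Zsum, Zsum, Finset.mul_sum]
  apply Finset.sum_le_sum
  intro w _
  have hW : IsUnit (wordProd A w) := isUnit_wordProd hA w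
  have hPn : (0:ℝ) ≤ ∏ j : Fin n, pvec p (w j) ^ q :=
    Finset.prod_nonneg fun j _ => (Real.rpow_pos_of_pos (pvec_pos hp _) _).le
  have hkey : (θ ^ (t * (1 - q))) ^ n * svf s (wordProd A w) ^ (1 - q)
      ≤ svf (s + t) (wordProd A w) ^ (1 - q) := by
    have h1 : svf (s + t) (wordProd A w) ≤ svf s (wordProd A w) * (θ ^ n) ^ t := by
      calc svf (s + t) (wordProd A w)
          ≤ svf s (wordProd A w) * singularValues (wordProd A w) 0 ^ t := svf_mono hW hs ht
        _ ≤ svf s (wordProd A w) * (θ ^ n) ^ t := by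
            apply mul_le_mul_of_nonneg_left _ (svf_pos hW hs).le
            apply Real.rpow_le_rpow (sv_nonneg _ _) _ ht.le
            rw [← opNorm_eq_sv0]; exact opNorm_wordProd_le A w
    calc (θ ^ (t * (1 - q))) ^ n * svf s (wordProd A w) ^ (1 - q)
        = (svf s (wordProd A w) * (θ ^ n) ^ t) ^ (1 - q) := by
          rw [Real.mul_rpow (svf_pos hW hs).le (by positivity),
            ← Real.rpow_natCast θ n, ← Real.rpow_mul hθ0.le, ← Real.rpow_mul hθ0.le,
            ← Real.rpow_natCast (θ ^ (t * (1 - q))) n, ← Real.rpow_mul hθ0.le]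
          ring_nf
      _ ≤ _ := Real.rpow_le_rpow_of_nonpos (svf_pos hW (by linarith)) h1 (by linarith)
  calc (θ ^ (t * (1 - q))) ^ n * (svf s (wordProd A w) ^ (1 - q) * ∏ j : Fin n, pvec p (w j) ^ q)
      = ((θ ^ (t * (1 - q))) ^ n * svf s (wordProd A w) ^ (1 - q))
          * ∏ j : Fin n, pvec p (w j) ^ q := by
        ring
    _ ≤ svf (s + t) (wordProd A w) ^ (1 - q) * ∏ j : Fin n, pvec p (w j) ^ q :=
        mul_le_mul_of_nonneg_right hkey hPn

/-! #### Existence of the limit and the main inequality -/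

lemma exists_tendsto (hA : ∀ i, IsUnit (A i)) (hp : p ∈ Set.Ioo (0:ℝ) 1) (hq : 1 < q)
    (hs : 0 < s) :
    ∃ L : ℝ, Tendsto (fun n : ℕ => (1 / (n : ℝ)) * Real.log (Zsum A p q s n)) atTop (𝓝 L) := by
  set u : ℕ → ℝ := fun n => -Real.log (Zsum A p q s n) with hu
  have hsub : Subadditive u := by
    intro m n
    have h1 : 0 < Zsum A p q s m := Zsum_pos hA hp hs m
    have h2 : 0 < Zsum A p q s n := Zsum_pos hA hp hs n
    have h3 : Real.log (Zsum A p q s m) + Real.log (Zsum A p q s n)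
        ≤ Real.log (Zsum A p q s (m + n)) := by
      rw [← Real.log_mul h1.ne' h2.ne']
      exact Real.log_le_log (mul_pos h1 h2) (Zsum_superadd hA hp hq hs m n)
    simp only [hu]
    linarith
  set K : ℝ := (min |(A 0).det| |(A 1).det| / max (opNorm (A 0)) (opNorm (A 1)))
      ^ (s * (1 - q)) * (p ^ q + (1 - p) ^ q) with hK
  have hbdd : BddBelow (Set.range fun n : ℕ => u n / n) := by
    refine ⟨min 0 (-Real.log K), ?_⟩
    rintro x ⟨n, rfl⟩
    rcases Nat.eq_zero_or_pos n with h | h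
    · subst h
      simp only [Nat.cast_zero, div_zero]
      exact min_le_left _ _
    · have hn : (0:ℝ) < n := by exact_mod_cast h
      have h1 : Real.log (Zsum A p q s n) ≤ n * Real.log K := by
        rw [← Real.log_pow]
        exact Real.log_le_log (Zsum_pos hA hp hs n) (Zsum_le hA hp hq hs n)
      refine le_trans (min_le_right _ _) ?_
      rw [le_div_iff₀ hn]
      simp only [hu]
      nlinarith
  refine ⟨-hsub.lim, ?_⟩
  have := (hsub.tendsto_lim hbdd).neg
  apply this.congr
  intro n
  simp only [hu]
  rw [one_div, neg_div, neg_neg, div_eq_inv_mul]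

lemma main_ineq (hA : ∀ i, IsUnit (A i)) (hn0 : opNorm (A 0) < 1) (hn1 : opNorm (A 1) < 1)
    (hq : 1 < q) (hp : p ∈ Set.Ioo (0:ℝ) 1) (hs : 0 < s) (ht : 0 < t) :
    (1 - q) * t * Real.log (max (opNorm (A 0)) (opNorm (A 1))) + Rq A p q s
      ≤ Rq A p q (s + t) ∧ Rq A p q s < Rq A p q (s + t) := by
  set θ := max (opNorm (A 0)) (opNorm (A 1)) with hθ
  have hθ0 : 0 < θ := theta_pos hA
  have hθ1 : θ < 1 := max_lt hn0 hn1
  obtain ⟨L1, h1⟩ := exists_tendsto hA hp hq hs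
  obtain ⟨L2, h2⟩ := exists_tendsto hA hp hq (show 0 < s + t by linarith)
  have hR1 : Rq A p q s = L1 := h1.limUnder_eq
  have hR2 : Rq A p q (s + t) = L2 := h2.limUnder_eq
  have hle : (1 - q) * t * Real.log θ + L1 ≤ L2 := by
    apply le_of_tendsto_of_tendsto (tendsto_const_nhds.add h1) h2
    filter_upwards [eventually_ge_atTop 1] with n hn
    have hn' : (0:ℝ) < n := by exact_mod_cast hn
    have hcomp := Zsum_compare hA hp hq hs ht n
    have hZ1 : 0 < Zsum A p q s n := Zsum_pos hA hp hs n
    have hZ2 : 0 < Zsum A p q (s + t) n := Zsum_pos hA hp (by linarith) n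
    have hE : (0:ℝ) < θ ^ (t * (1 - q)) := Real.rpow_pos_of_pos hθ0 _
    have hlog : (n : ℝ) * Real.log (θ ^ (t * (1 - q))) + Real.log (Zsum A p q s n)
        ≤ Real.log (Zsum A p q (s + t) n) := by
      rw [← Real.log_pow, ← Real.log_mul (by positivity) hZ1.ne']
      exact Real.log_le_log (by positivity) hcomp
    have hlogE : Real.log (θ ^ (t * (1 - q))) = t * (1 - q) * Real.log θ :=
      Real.log_rpow hθ0 _
    show (1 - q) * t * Real.log θ + 1 / (n:ℝ) * Real.log (Zsum A p q s n)
        ≤ 1 / (n:ℝ) * Real.log (Zsum A p q (s + t) n)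
    rw [hlogE] at hlog
    have := mul_le_mul_of_nonneg_left hlog (le_of_lt (one_div_pos.2 hn'))
    calc (1 - q) * t * Real.log θ + 1 / (n:ℝ) * Real.log (Zsum A p q s n)
        = 1 / (n:ℝ) * ((n:ℝ) * (t * (1 - q) * Real.log θ) + Real.log (Zsum A p q s n)) := by
          field_simp
      _ ≤ _ := this
  have hpos : 0 < (1 - q) * t * Real.log θ := by
    have hlt : Real.log θ < 0 := Real.log_neg hθ0 hθ1
    have : (1 - q) * t < 0 := mul_neg_of_neg_of_pos (by linarith) ht
    exact mul_pos_of_neg_of_neg this hlt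
  constructor
  · rw [hR1, hR2]; exact hle
  · rw [hR1, hR2]; linarith

end Stmt4Aux
end Stmt4Aux

/-- `s ↦ R_q(A₁,A₂,p,s)` is strictly increasing on `(0,∞)`; indeed with
`θ := max(‖A₁‖,‖A₂‖)` one has `R_q(s+t) ≥ (1−q)·t·log θ + R_q(s) > R_q(s)` for `s, t > 0`. -/
theorem stmt4 (A₁ A₂ : Mat2) (h1 : IsUnit A₁) (h2 : IsUnit A₂)
    (hn1 : opNorm A₁ < 1) (hn2 : opNorm A₂ < 1)
    (q p : ℝ) (hq : 1 < q) (hp : p ∈ Set.Ioo (0 : ℝ) 1) :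
    StrictMonoOn (fun s : ℝ => Rq ![A₁, A₂] p q s) (Set.Ioi 0) ∧
    ∀ s > (0 : ℝ), ∀ t > (0 : ℝ),
      (1 - q) * t * Real.log (max (opNorm A₁) (opNorm A₂)) + Rq ![A₁, A₂] p q s
          ≤ Rq ![A₁, A₂] p q (s + t) ∧
      Rq ![A₁, A₂] p q s < Rq ![A₁, A₂] p q (s + t) := by
  classical
  set A : Fin 2 → Mat2 := ![A₁, A₂] with hA
  have hA0 : A 0 = A₁ := rfl
  have hA1 : A 1 = A₂ := rfl
  have hunit : ∀ i, IsUnit (A i) := by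
    intro i
    have : i = 0 ∨ i = 1 := by omega
    rcases this with h | h <;> rw [h]
    exacts [h1, h2]
  have key : ∀ s > (0 : ℝ), ∀ t > (0 : ℝ),
      (1 - q) * t * Real.log (max (opNorm A₁) (opNorm A₂)) + Rq A p q s
          ≤ Rq A p q (s + t) ∧ Rq A p q s < Rq A p q (s + t) := by
    intro s hs t ht
    have := Stmt4Aux.main_ineq (A := A) hunit (by rw [hA0]; exact hn1) (by rw [hA1]; exact hn2)
      hq hp hs ht
    rwa [hA0, hA1] at this
  refine ⟨?_, key⟩
  intro s hs s' hs' hlt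
  have h := (key s hs (s' - s) (by simpa using sub_pos.2 hlt)).2
  simpa [add_sub_cancel] using h
end
end

section
/- Let H be a 2×2 real matrix with determinant 1 and two unequal real eigenvalues, and let R be a 2×2 real matrix with determinant 1 and non-real eigenvalues. Then in every open neighbourhood of R there exists a 2×2 real matrix R' such that, for some integer k ≥ 1 depending on R', lim_{n→∞} ‖Hⁿ (R')ᵏ Hⁿ‖^{1/(2n+k)} = 1. -/
open MeasureTheory Filter Topology

noncomputable section

open Polynomial in
lemma charpoly_eval_fin_two (M : Matrix (Fin 2) (Fin 2) ℝ) (x : ℝ) :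
    M.charpoly.eval x = x^2 - (M 0 0 + M 1 1)*x + M.det := by
  rw [Matrix.charpoly, Matrix.det_fin_two, Matrix.det_fin_two]
  rw [Matrix.charmatrix_apply_eq, Matrix.charmatrix_apply_eq,
    Matrix.charmatrix_apply_ne _ _ _ (by decide), Matrix.charmatrix_apply_ne _ _ _ (by decide)]
  simp
  ring

lemma eigvec_of_root (H : Matrix (Fin 2) (Fin 2) ℝ) (a : ℝ) (h : H.charpoly.IsRoot a) :
    ∃ u : Fin 2 → ℝ, u ≠ 0 ∧ H.mulVec u = a • u := by
  have hd : (a • (1 : Matrix (Fin 2) (Fin 2) ℝ) - H).det = 0 := by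
    rw [Matrix.det_fin_two]
    have h2 := h
    rw [Polynomial.IsRoot, charpoly_eval_fin_two, Matrix.det_fin_two] at h2
    simp [Matrix.one_apply]
    linear_combination h2
  obtain ⟨u, hu0, hu⟩ := (Matrix.exists_mulVec_eq_zero_iff).2 hd
  refine ⟨u, hu0, ?_⟩
  have := hu
  rw [Matrix.sub_mulVec, sub_eq_zero] at this
  rw [← this, Matrix.smul_mulVec, Matrix.one_mulVec]

lemma Hside (H : Matrix (Fin 2) (Fin 2) ℝ) (hdet : H.det = 1) (a b : ℝ) (hab : a ≠ b)
    (ha : H.charpoly.IsRoot a) (hb : H.charpoly.IsRoot b) :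
    ∃ S : Matrix (Fin 2) (Fin 2) ℝ, ∃ c d : ℝ, IsUnit S.det ∧ c * d = 1 ∧ |d| < 1 ∧
      ∀ n : ℕ, H ^ n = S * Matrix.diagonal ![c, d] ^ n * S⁻¹ := by
  have hroot : ∀ x : ℝ, H.charpoly.IsRoot x → x^2 - (H 0 0 + H 1 1)*x + 1 = 0 := by
    intro x hx
    rw [Polynomial.IsRoot, charpoly_eval_fin_two, hdet] at hx
    exact hx
  have hab1 : a * b = 1 := by
    have h1 := hroot a ha
    have h2 := hroot b hb
    have hsum : a + b = H 0 0 + H 1 1 := by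
      have : (a - b) * (a + b - (H 0 0 + H 1 1)) = 0 := by nlinarith
      rcases mul_eq_zero.1 this with h | h
      · exact absurd (sub_eq_zero.1 h) hab
      · linarith [sub_eq_zero.1 h]
    linear_combination -h1 + a * hsum
  -- wlog |b| < 1
  have key : ∀ c d : ℝ, c * d = 1 → c ≠ d → H.charpoly.IsRoot c → H.charpoly.IsRoot d →
      |d| < 1 →
      ∃ S : Matrix (Fin 2) (Fin 2) ℝ, ∃ c' d' : ℝ, IsUnit S.det ∧ c' * d' = 1 ∧ |d'| < 1 ∧
      ∀ n : ℕ, H ^ n = S * Matrix.diagonal ![c', d'] ^ n * S⁻¹ := by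
    intro c d hcd hne hc hd hdlt
    obtain ⟨u, hu0, hu⟩ := eigvec_of_root H c hc
    obtain ⟨v, hv0, hv⟩ := eigvec_of_root H d hd
    set S : Matrix (Fin 2) (Fin 2) ℝ := !![u 0, v 0; u 1, v 1] with hS
    have hu' : ∀ i, H i 0 * u 0 + H i 1 * u 1 = c * u i := by
      intro i
      have := congrFun hu i
      simpa [Matrix.mulVec, dotProduct, Fin.sum_univ_two] using this
    have hv' : ∀ i, H i 0 * v 0 + H i 1 * v 1 = d * v i := by
      intro i
      have := congrFun hv i
      simpa [Matrix.mulVec, dotProduct, Fin.sum_univ_two] using this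
    have hSdet : S.det ≠ 0 := by
      intro h0
      obtain ⟨w, hw0, hw⟩ := (Matrix.exists_mulVec_eq_zero_iff).2 h0
      have hw' : ∀ i : Fin 2, S i 0 * w 0 + S i 1 * w 1 = 0 := by
        intro i
        have := congrFun hw i
        simpa [Matrix.mulVec, dotProduct, Fin.sum_univ_two] using this
      have e1 : ∀ i : Fin 2, u i * w 0 + v i * w 1 = 0 := by
        intro i; have := hw' i; fin_cases i <;> simpa [hS] using this
      have e2 : ∀ i : Fin 2, c * u i * w 0 + d * v i * w 1 = 0 := by
        intro i
        have h1 := e1 0; have h2 := e1 1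
        have hthis : H i 0 * (u 0 * w 0 + v 0 * w 1) + H i 1 * (u 1 * w 0 + v 1 * w 1) = 0 := by
          rw [h1, h2]; ring
        linear_combination hthis - w 0 * (hu' i) - w 1 * (hv' i)
      have hw0' : w 0 = 0 ∨ (∀ i, u i = 0) := by
        by_cases h : w 0 = 0
        · exact Or.inl h
        · right; intro i
          have h1 := e1 i; have h2 := e2 i
          have : (c - d) * (u i * w 0) = 0 := by linear_combination h2 - d * h1
          rcases mul_eq_zero.1 this with h' | h'
          · exact absurd (sub_eq_zero.1 h') hne
          · rcases mul_eq_zero.1 h' with h'' | h''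
            · exact h''
            · exact absurd h'' h
      have hw00 : w 0 = 0 := by
        rcases hw0' with h | h
        · exact h
        · exact absurd (funext fun i => h i) hu0
      have hw11 : w 1 = 0 := by
        have hvne : ∃ i, v i ≠ 0 := by
          by_contra h
          push_neg at h
          exact hv0 (funext fun i => h i)
        obtain ⟨i, hi⟩ := hvne
        have := e1 i
        rw [hw00] at this
        simp at this
        rcases this with h | h
        · exact absurd h hi
        · exact h
      apply hw0
      funext i
      fin_cases i <;> simp [hw00, hw11]
    have hSunit : IsUnit S.det := isUnit_iff_ne_zero.2 hSdet
    have hHS : H * S = S * Matrix.diagonal ![c, d] := by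
      ext i j
      fin_cases i <;> fin_cases j <;>
        simp [hS, Matrix.mul_apply, Fin.sum_univ_two, Matrix.diagonal] <;>
        [linear_combination hu' 0; linear_combination hv' 0; linear_combination hu' 1;
          linear_combination hv' 1]
    have hpow : ∀ n : ℕ, H ^ n * S = S * Matrix.diagonal ![c, d] ^ n := by
      intro n
      induction n with
      | zero => simp
      | succ n ih =>
        rw [pow_succ, pow_succ, Matrix.mul_assoc, hHS, ← Matrix.mul_assoc, ih, Matrix.mul_assoc]
    refine ⟨S, c, d, hSunit, hcd, hdlt, fun n => ?_⟩
    rw [← hpow n, Matrix.mul_assoc, Matrix.mul_nonsing_inv _ hSunit, Matrix.mul_one]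
  have habs : |a| ≠ 1 := by
    intro h1
    have : a = 1 ∨ a = -1 := abs_eq (by norm_num : (0:ℝ) ≤ 1) |>.1 h1
    rcases this with h | h <;> (apply hab; nlinarith)
  rcases lt_or_gt_of_ne habs with h | h
  · exact key b a (by rw [mul_comm]; exact hab1) hab.symm hb ha h
  · have hbabs : |b| < 1 := by
      have ha0 : a ≠ 0 := by intro h0; rw [h0] at hab1; simp at hab1
      have : |a| * |b| = 1 := by rw [← abs_mul, hab1]; simp
      nlinarith [abs_nonneg b]
    exact key a b hab1 hab ha hb hbabs

noncomputable def Rmf (J : Matrix (Fin 2) (Fin 2) ℝ) (α : ℝ) : Matrix (Fin 2) (Fin 2) ℝ :=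
  Real.cos α • 1 + Real.sin α • J

lemma Rmf_mul (J : Matrix (Fin 2) (Fin 2) ℝ) (hJ : J * J = -1) (α β : ℝ) :
    Rmf J α * Rmf J β = Rmf J (α + β) := by
  unfold Rmf
  rw [Real.cos_add, Real.sin_add, add_mul, mul_add, mul_add, smul_mul_smul_comm,
    smul_mul_smul_comm, smul_mul_smul_comm, smul_mul_smul_comm, hJ]
  simp only [one_mul, mul_one]
  module

lemma Rmf_pow (J : Matrix (Fin 2) (Fin 2) ℝ) (hJ : J * J = -1) (α : ℝ) (n : ℕ) :
    Rmf J α ^ n = Rmf J (n * α) := by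
  induction n with
  | zero => simp [Rmf]
  | succ n ih =>
    rw [pow_succ, ih, Rmf_mul J hJ]
    push_cast
    ring_nf

lemma Rmf_det (J : Matrix (Fin 2) (Fin 2) ℝ) (hJ : J * J = -1) (htr : J 0 0 + J 1 1 = 0)
    (α : ℝ) : (Rmf J α).det = 1 := by
  have hJ00 : J 0 0 * J 0 0 + J 0 1 * J 1 0 = -1 := by
    have := congrFun (congrFun hJ 0) 0
    simpa [Matrix.mul_apply, Fin.sum_univ_two, Matrix.one_apply] using this
  have hpy := Real.sin_sq_add_cos_sq α
  rw [Matrix.det_fin_two]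
  simp [Rmf, Matrix.one_apply]
  linear_combination (Real.cos α * Real.sin α + Real.sin α ^ 2 * J 0 0) * htr -
    Real.sin α ^ 2 * hJ00 + hpy

lemma Rside (R : Matrix (Fin 2) (Fin 2) ℝ) (hdet : R.det = 1)
    (hnr : ∀ x : ℝ, ¬ R.charpoly.IsRoot x) :
    ∃ J : Matrix (Fin 2) (Fin 2) ℝ, J * J = -1 ∧ J 0 0 + J 1 1 = 0 ∧
      ∃ θ : ℝ, Rmf J θ = R := by
  set t := R 0 0 + R 1 1 with ht
  have hdet' : R 0 0 * R 1 1 - R 0 1 * R 1 0 = 1 := by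
    rw [Matrix.det_fin_two] at hdet; exact hdet
  have ht4 : t^2 < 4 := by
    by_contra h
    push_neg at h
    apply hnr ((t + Real.sqrt (t^2 - 4))/2)
    have hsq : Real.sqrt (t^2-4) ^ 2 = t^2 - 4 := Real.sq_sqrt (by linarith)
    rw [Polynomial.IsRoot, charpoly_eval_fin_two, hdet]
    rw [← ht]
    linear_combination hsq / 4
  set s := Real.sqrt (4 - t^2) / 2 with hsdef
  have hs : 0 < s := by
    apply div_pos _ (by norm_num)
    exact Real.sqrt_pos.2 (by linarith)
  have hs2 : s^2 = 1 - t^2/4 := by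
    rw [hsdef, div_pow, Real.sq_sqrt (by linarith)]
    ring
  set J := s⁻¹ • (R - (t/2) • (1 : Matrix (Fin 2) (Fin 2) ℝ)) with hJdef
  have hJtr : J 0 0 + J 1 1 = 0 := by
    simp [hJdef, Matrix.one_apply]
    rw [ht]
    ring
  have hK : (R - (t/2) • (1 : Matrix (Fin 2) (Fin 2) ℝ)) *
      (R - (t/2) • (1 : Matrix (Fin 2) (Fin 2) ℝ)) = (t^2/4 - 1) • 1 := by
    ext i j
    fin_cases i <;> fin_cases j <;>
      simp [Matrix.mul_apply, Fin.sum_univ_two, Matrix.one_apply] <;> rw [ht] <;>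
      first | linear_combination -hdet' | ring
  have hJ : J * J = -1 := by
    rw [hJdef, smul_mul_smul_comm, hK, smul_smul]
    have hc : s⁻¹ * s⁻¹ * (t^2/4 - 1) = -1 := by
      have h1 : t^2/4 - 1 = -(s*s) := by linear_combination hs2
      rw [h1]
      field_simp [hs.ne']
    rw [hc]
    simp
  refine ⟨J, hJ, hJtr, Real.arccos (t/2), ?_⟩
  have habs : |t/2| ≤ 1 := by
    rw [abs_le]; constructor <;> nlinarith
  have hcos : Real.cos (Real.arccos (t/2)) = t/2 :=
    Real.cos_arccos (by linarith [abs_le.1 habs |>.1]) (by linarith [abs_le.1 habs |>.2])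
  have hsin : Real.sin (Real.arccos (t/2)) = s := by
    rw [Real.sin_arccos]
    rw [show (1 - (t/2)^2) = s^2 by nlinarith [hs2], Real.sqrt_sq hs.le]
  rw [Rmf, hcos, hsin, hJdef, smul_smul, mul_inv_cancel₀ hs.ne', one_smul]
  abel

lemma opNorm_continuous (d : ℕ) : Continuous fun A : Matrix (Fin d) (Fin d) ℝ => opNorm A := by
  have hlin : IsLinearMap ℝ (fun A : Matrix (Fin d) (Fin d) ℝ =>
      Matrix.toEuclideanCLM (𝕜 := ℝ) (n := Fin d) A) :=
    ⟨fun x y => map_add _ x y, fun c x => map_smul _ c x⟩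
  have hcont : Continuous (fun A : Matrix (Fin d) (Fin d) ℝ =>
      Matrix.toEuclideanCLM (𝕜 := ℝ) (n := Fin d) A) :=
    LinearMap.continuous_of_finiteDimensional hlin.mk'
  exact continuous_norm.comp hcont

lemma opNorm_ne_zero {d : ℕ} (A : Matrix (Fin d) (Fin d) ℝ) (h : A ≠ 0) : opNorm A ≠ 0 := by
  unfold opNorm
  rw [norm_ne_zero_iff]
  intro h0
  apply h
  have hinj : Function.Injective (fun B : Matrix (Fin d) (Fin d) ℝ =>
      Matrix.toEuclideanCLM (𝕜 := ℝ) (n := Fin d) B) :=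
    (Matrix.toEuclideanCLM (𝕜 := ℝ) (n := Fin d)).injective
  apply hinj
  simp only [h0, map_zero]


/-- If `H` has determinant one and two unequal real eigenvalues and `R` has
determinant one and non-real eigenvalues, then every neighbourhood of `R` contains `R'` such
that `lim_n ‖Hⁿ(R')ᵏHⁿ‖^{1/(2n+k)} = 1` for some integer `k ≥ 1`. -/
theorem stmt12 (H R : Mat2)
    (hH : H.det = 1 ∧ ∃ a b : ℝ, a ≠ b ∧ H.charpoly.IsRoot a ∧ H.charpoly.IsRoot b)
    (hR : R.det = 1 ∧ ∀ x : ℝ, ¬ R.charpoly.IsRoot x) :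
    ∀ U ∈ 𝓝 R, ∃ R' ∈ U, ∃ k : ℕ, 1 ≤ k ∧
      Filter.Tendsto (fun n : ℕ => opNorm (H ^ n * R' ^ k * H ^ n) ^ (1 / (2 * (n : ℝ) + k)))
        Filter.atTop (𝓝 1) := by
  intro U hU
  obtain ⟨hdetH, a0, b0, hab0, ha0, hb0⟩ := hH
  obtain ⟨hdetR, hnr⟩ := hR
  obtain ⟨S, a, b, hSunit, hab1, hblt, hHn⟩ := Hside H hdetH a0 b0 hab0 ha0 hb0
  obtain ⟨J, hJ2, hJtr, θ, hRmθ⟩ := Rside R hdetR hnr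
  have hRmcont : Continuous (Rmf J) := by
    unfold Rmf
    exact (Real.continuous_cos.smul continuous_const).add
      (Real.continuous_sin.smul continuous_const)
  have hmem : Rmf J ⁻¹' U ∈ 𝓝 θ := by
    apply hRmcont.continuousAt.preimage_mem_nhds
    rw [hRmθ]; exact hU
  obtain ⟨δ, hδ, hball⟩ := Metric.mem_nhds_iff.1 hmem
  set j := (S⁻¹ * J * S) 0 0 with hj
  set α₀ := Real.arctan j + Real.pi / 2 with hα₀
  set k := ⌈Real.pi / δ⌉₊ + 1 with hk
  have hk1 : 1 ≤ k := Nat.le_add_left 1 _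
  have hkpos : (0:ℝ) < (k : ℝ) := by positivity
  have hkgt : Real.pi / δ < (k : ℝ) := by
    calc Real.pi / δ ≤ (⌈Real.pi / δ⌉₊ : ℝ) := Nat.le_ceil _
    _ < (k : ℝ) := by rw [hk]; push_cast; linarith
  set m := round (((k : ℝ) * θ - α₀) / (2 * Real.pi)) with hm
  set θ' := (α₀ + 2 * Real.pi * (m : ℝ)) / (k : ℝ) with hθ'
  have hclose : |θ' - θ| < δ := by
    have h1 : θ' - θ = (α₀ + 2 * Real.pi * (m : ℝ) - (k : ℝ) * θ) / (k : ℝ) := by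
      field_simp [hθ']
      rw [hθ', sub_mul, div_mul_cancel₀ _ hkpos.ne']
    have h2 : α₀ + 2 * Real.pi * (m : ℝ) - (k : ℝ) * θ =
        -(2 * Real.pi) * ((((k : ℝ) * θ - α₀) / (2 * Real.pi)) - (m : ℝ)) := by
      field_simp
      ring
    have h3 := abs_sub_round ((((k : ℝ) * θ - α₀) / (2 * Real.pi)))
    rw [h1, abs_div, abs_of_pos hkpos, div_lt_iff₀ hkpos, h2, abs_mul]
    have hπ : |(-(2 * Real.pi))| = 2 * Real.pi := by
      rw [abs_neg, abs_of_pos (by positivity)]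
    rw [hπ]
    have : |((k : ℝ) * θ - α₀) / (2 * Real.pi) - (m : ℝ)| ≤ 1/2 := h3
    have hπδ : Real.pi < δ * (k:ℝ) := by
      rw [← div_lt_iff₀' hδ]
      exact hkgt
    nlinarith [Real.pi_pos]
  have hR'U : Rmf J θ' ∈ U := by
    apply hball
    rw [Metric.mem_ball, Real.dist_eq]
    exact hclose
  refine ⟨Rmf J θ', hR'U, k, hk1, ?_⟩
  have hkθ' : (k : ℝ) * θ' = α₀ + 2 * Real.pi * (m : ℝ) := by
    rw [hθ']
    field_simp
  have hRk : Rmf J θ' ^ k = Rmf J α₀ := by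
    rw [Rmf_pow J hJ2, hkθ']
    have he : α₀ + 2 * Real.pi * (m : ℝ) = α₀ + (m : ℝ) * (2 * Real.pi) := by ring
    rw [Rmf, Rmf, he, Real.cos_add_int_mul_two_pi, Real.sin_add_int_mul_two_pi]
  set N := S⁻¹ * Rmf J α₀ * S with hN
  have hSS : S⁻¹ * S = 1 := Matrix.nonsing_inv_mul S hSunit
  have hN00 : N 0 0 = 0 := by
    have hexp : N = Real.cos α₀ • (1 : Mat2) + Real.sin α₀ • (S⁻¹ * J * S) := by
      rw [hN, Rmf, Matrix.mul_add, Matrix.add_mul, Matrix.mul_smul, Matrix.smul_mul,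
        Matrix.mul_one, hSS, Matrix.mul_smul, Matrix.smul_mul]
    rw [hexp]
    simp only [Matrix.add_apply, Matrix.smul_apply, Matrix.one_apply_eq, smul_eq_mul, mul_one]
    rw [hα₀, Real.cos_add_pi_div_two, Real.sin_add_pi_div_two, Real.sin_arctan, Real.cos_arctan]
    rw [← hj]
    field_simp
    ring
  have hdetN : N.det = 1 := by
    rw [hN, Matrix.det_mul, Matrix.det_mul, Rmf_det J hJ2 hJtr, Matrix.det_nonsing_inv]
    field_simp [hSunit.ne_zero]
    exact Ring.inverse_mul_cancel _ hSunit
  have hdetN' : N 0 1 * N 1 0 = -1 := by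
    rw [Matrix.det_fin_two, hN00] at hdetN
    linarith
  set A : Mat2 := !![(0:ℝ), N 0 1; N 1 0, 0] with hA
  set C : Mat2 := !![(0:ℝ), 0; 0, N 1 1] with hC
  have hab1' : a ^ 1 * b ^ 1 = 1 := by simpa using hab1
  have hDN : ∀ n : ℕ, Matrix.diagonal ![a,b] ^ n * N * Matrix.diagonal ![a,b] ^ n
      = A + (b^2)^n • C := by
    intro n
    have habn : a ^ n * b ^ n = 1 := by rw [← mul_pow, hab1, one_pow]
    have hdd : ∀ (v : Fin 2 → ℝ) (i j : Fin 2),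
        (Matrix.diagonal v * N * Matrix.diagonal v) i j = v i * N i j * v j := by
      intro v i j
      rw [Matrix.mul_diagonal, Matrix.diagonal_mul]
    ext i j
    rw [Matrix.diagonal_pow, hdd]
    fin_cases i <;> fin_cases j <;>
      simp [hA, hC, Fin.mk_zero, Fin.mk_one] <;>
      first
        | simp [hN00]
        | linear_combination (N 0 1) * habn
        | linear_combination (N 1 0) * habn
        | (rw [pow_two, mul_pow]; ring)
        | linear_combination (N 0 1) * habn - habn
        | linear_combination (N 1 0) * habn - habn
  have hform : ∀ n : ℕ, H ^ n * Rmf J θ' ^ k * H ^ n = S * (A + (b^2)^n • C) * S⁻¹ := by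
    intro n
    rw [hRk, hHn n, ← hDN n, hN]
    simp only [Matrix.mul_assoc]
  set L : Mat2 := S * A * S⁻¹ with hL
  have hLne : L ≠ 0 := by
    intro h0
    have hdetA : A.det = 1 := by
      rw [hA, Matrix.det_fin_two_of]
      linarith [hdetN']
    have : L.det = 1 := by
      rw [hL, Matrix.det_mul, Matrix.det_mul, hdetA, Matrix.det_nonsing_inv]
      field_simp [hSunit.ne_zero]
      exact Ring.mul_inverse_cancel _ hSunit
    rw [h0] at this
    simp at this
  have hopL : opNorm L ≠ 0 := opNorm_ne_zero L hLne
  have hb2 : |b^2| < 1 := by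
    rw [abs_pow]
    nlinarith [abs_nonneg b, hblt]
  have htend0 : Tendsto (fun n : ℕ => ((b^2)^n : ℝ)) atTop (𝓝 0) :=
    tendsto_pow_atTop_nhds_zero_of_abs_lt_one hb2
  have htendM : Tendsto (fun n : ℕ => S * (A + (b^2)^n • C) * S⁻¹) atTop (𝓝 L) := by
    have h1 : Tendsto (fun n : ℕ => A + (b^2)^n • C) atTop (𝓝 A) := by
      have := tendsto_const_nhds (x := A) (f := atTop (α := ℕ)) |>.add (htend0.smul_const C)
      simpa using this
    have hcont : Continuous (fun X : Mat2 => S * X * S⁻¹) :=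
      (continuous_const.matrix_mul continuous_id).matrix_mul continuous_const
    have := (hcont.tendsto A).comp h1
    simpa [hL, Function.comp_def] using this
  have htendNorm : Tendsto (fun n : ℕ => opNorm (H ^ n * Rmf J θ' ^ k * H ^ n)) atTop
      (𝓝 (opNorm L)) := by
    have h2 : Tendsto (fun n : ℕ => opNorm (S * (A + (b^2)^n • C) * S⁻¹)) atTop
        (𝓝 (opNorm L)) := ((opNorm_continuous 2).tendsto L).comp htendM
    exact h2.congr fun n => by rw [← hform n]
  have hexp : Tendsto (fun n : ℕ => 1 / (2 * (n : ℝ) + k)) atTop (𝓝 0) := by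
    simp only [one_div]
    apply Tendsto.inv_tendsto_atTop
    apply tendsto_atTop_add_const_right
    exact tendsto_natCast_atTop_atTop.const_mul_atTop (by norm_num : (0:ℝ) < 2)
  have hfin := htendNorm.rpow hexp (Or.inl hopL)
  rw [Real.rpow_zero] at hfin
  exact hfin

end
end

section
/- Let ε, κ > 0 and set Q := 1 + κ/ε. Then for every p ∈ [1/2, 1) and every q > Q, one has (p^q + (1−p)^q)^{1/q} < p^{κ/(κ+ε)}; equivalently, log(p^q)/log(p^q + (1−p)^q) < 1 + ε/κ. -/
open MeasureTheory Filter Topology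

noncomputable section

/-- With `Q := 1 + κ/ε`, for all `p ∈ [1/2,1)` and `q > Q`:
`(p^q + (1−p)^q)^{1/q} < p^{κ/(κ+ε)}`, equivalently
`log(p^q)/log(p^q + (1−p)^q) < 1 + ε/κ`. -/
theorem stmt16 (ε κ : ℝ) (hε : 0 < ε) (hκ : 0 < κ) (p q : ℝ)
    (hp : p ∈ Set.Ico (1 / 2 : ℝ) 1) (hq : 1 + κ / ε < q) :
    (p ^ q + (1 - p) ^ q) ^ (1 / q) < p ^ (κ / (κ + ε)) ∧
    Real.log (p ^ q) / Real.log (p ^ q + (1 - p) ^ q) < 1 + ε / κ := by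
  obtain ⟨hp2, hp1⟩ := hp
  have hp0 : 0 < p := lt_of_lt_of_le (by norm_num) hp2
  have h1p0 : 0 ≤ 1 - p := by linarith
  have h1pp : 1 - p ≤ p := by linarith
  have hκε : 0 < κ + ε := by linarith
  have hq1 : 1 < q := lt_trans (lt_add_of_pos_right 1 (div_pos hκ hε)) hq
  have hq0 : 0 < q := by linarith
  set α := κ / (κ + ε) with hα
  have hα0 : 0 < α := div_pos hκ hκε
  have hqε : κ + ε < q * ε := by
    have h1 : (1 + κ / ε) * ε < q * ε := mul_lt_mul_of_pos_right hq hε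
    have h2 : κ / ε * ε = κ := div_mul_cancel₀ κ hε.ne'
    nlinarith
  have hαq : α * q < q - 1 := by
    rw [hα, div_mul_eq_mul_div, div_lt_iff₀ hκε]
    nlinarith
  have key1 : p ^ q + (1 - p) ^ q ≤ p ^ (q - 1) := by
    have e1 : p ^ (q - 1) * p = p ^ q := by
      rw [← Real.rpow_add_one hp0.ne']; norm_num
    have e2 : (1 - p) ^ q ≤ p ^ (q - 1) * (1 - p) := by
      rcases eq_or_lt_of_le h1p0 with h | h
      · rw [← h, Real.zero_rpow hq0.ne', mul_zero]
      · have e3 : (1 - p) ^ (q - 1) * (1 - p) = (1 - p) ^ q := by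
          rw [← Real.rpow_add_one (ne_of_gt h)]; norm_num
        rw [← e3]
        exact mul_le_mul_of_nonneg_right
          (Real.rpow_le_rpow h1p0 h1pp (by linarith)) h1p0
    nlinarith
  have key2 : p ^ (q - 1) < p ^ (α * q) :=
    Real.rpow_lt_rpow_of_exponent_gt hp0 hp1 hαq
  have hS : p ^ q + (1 - p) ^ q < p ^ (α * q) := lt_of_le_of_lt key1 key2
  have hS0 : 0 < p ^ q + (1 - p) ^ q := by positivity
  constructor
  · have h := Real.rpow_lt_rpow hS0.le hS (by positivity : (0:ℝ) < 1/q)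
    have e : (p ^ (α * q)) ^ (1 / q) = p ^ α := by
      rw [← Real.rpow_mul hp0.le]
      congr 1
      field_simp
    rwa [e] at h
  · have hlogp : Real.log p < 0 := Real.log_neg hp0 hp1
    have hlogS : Real.log (p ^ q + (1 - p) ^ q) < α * q * Real.log p := by
      have h := Real.log_lt_log hS0 hS
      rwa [Real.log_rpow hp0] at h
    have hneg : α * q * Real.log p < 0 := by nlinarith [mul_pos hα0 hq0]
    have hlogS0 : Real.log (p ^ q + (1 - p) ^ q) < 0 := lt_trans hlogS hneg
    rw [Real.log_rpow hp0, div_lt_iff_of_neg hlogS0]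
    have hpos : (0:ℝ) < 1 + ε / κ := by positivity
    have hαinv : (1 + ε / κ) * α = 1 := by
      rw [hα]; field_simp
    nlinarith [mul_lt_mul_of_pos_left hlogS hpos]
end
end

section
/- Let A₁, A₂ be invertible 2×2 real matrices with ‖A₁‖ < 1 and ‖A₂‖ < 1, let p ∈ (0,1), q > 1, and let κ > 0 satisfy ϱ̲(A₁, A₂) ≥ e^{−κ} and log(p^q + (1−p)^q)/((1−q)·κ) ≤ 1. Then 𝔯_q(A₁, A₂, p) ≥ log(p^q + (1−p)^q)/((1−q)·κ). -/
open MeasureTheory Filter Topology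

noncomputable section

namespace S17
open Matrix Real
open scoped Matrix.Norms.L2Operator

lemma opNorm_def {d : ℕ} (A : Matrix (Fin d) (Fin d) ℝ) : opNorm A = ‖A‖ := rfl

lemma opNorm_nonneg' {d : ℕ} (A : Matrix (Fin d) (Fin d) ℝ) : 0 ≤ opNorm A := norm_nonneg _

lemma opNorm_mul_le' (A B : Mat2) : opNorm (A * B) ≤ opNorm A * opNorm B :=
  Matrix.l2_opNorm_mul A B

lemma opNorm_one' : opNorm (1 : Mat2) = 1 := by
  unfold opNorm; rw [_root_.map_one]; exact norm_one

lemma opNorm_pos (A : Mat2) (h : IsUnit A) : 0 < opNorm A := by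
  rw [opNorm_def, norm_pos_iff]; exact h.ne_zero

lemma opNorm_cstar' (A : Mat2) : opNorm (Aᴴ * A) = opNorm A ^ 2 := by
  rw [opNorm_def, opNorm_def, Matrix.l2_opNorm_conjTranspose_mul_self, sq]

lemma opNorm_conjTranspose (A : Mat2) : opNorm Aᴴ = opNorm A := by
  rw [opNorm_def, opNorm_def, Matrix.l2_opNorm_conjTranspose]

lemma opNorm_unitary (U : Matrix.unitaryGroup (Fin 2) ℝ) : opNorm U.1 = 1 := by
  have h1 : opNorm ((U.1)ᴴ * U.1) = 1 := by
    rw [← Matrix.star_eq_conjTranspose, Matrix.UnitaryGroup.star_mul_self]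
    exact opNorm_one'
  have h2 := opNorm_cstar' U.1
  nlinarith [opNorm_nonneg' U.1]

end S17
namespace S17
open Matrix Real
open scoped Matrix.Norms.L2Operator

lemma opNorm_diagonal_le (v : Fin 2 → ℝ) (M : ℝ) (hM0 : 0 ≤ M) (hM : ∀ i, |v i| ≤ M) :
    opNorm (Matrix.diagonal v) ≤ M := by
  rw [opNorm_def, Matrix.l2_opNorm_def]
  refine ContinuousLinearMap.opNorm_le_bound _ hM0 fun x => ?_
  rw [LinearEquiv.trans_apply, LinearMap.coe_toContinuousLinearMap',
    Matrix.toEuclideanLin_apply, EuclideanSpace.norm_eq, EuclideanSpace.norm_eq]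
  have key : ∀ i : Fin 2,
      ‖((WithLp.equiv 2 (Fin 2 → ℝ)).symm
        (Matrix.diagonal v *ᵥ (WithLp.equiv 2 (Fin 2 → ℝ)) x)) i‖ ^ 2 ≤ M ^ 2 * ‖x i‖ ^ 2 := by
    intro i
    have h1 : ((WithLp.equiv 2 (Fin 2 → ℝ)).symm
        (Matrix.diagonal v *ᵥ (WithLp.equiv 2 (Fin 2 → ℝ)) x)) i = v i * x i := by
      simp [Matrix.mulVec_diagonal]
      fin_cases i <;> rfl
    rw [h1, Real.norm_eq_abs, Real.norm_eq_abs, abs_mul, mul_pow]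
    have := pow_le_pow_left₀ (abs_nonneg (v i)) (hM i) 2
    exact mul_le_mul_of_nonneg_right this (by positivity)
  calc Real.sqrt (∑ i : Fin 2, ‖((WithLp.equiv 2 (Fin 2 → ℝ)).symm
          (Matrix.diagonal v *ᵥ (WithLp.equiv 2 (Fin 2 → ℝ)) x)) i‖ ^ 2)
      ≤ Real.sqrt (∑ i : Fin 2, M ^ 2 * ‖x i‖ ^ 2) :=
        Real.sqrt_le_sqrt (Finset.sum_le_sum fun i _ => key i)
    _ = M * Real.sqrt (∑ i : Fin 2, ‖x i‖ ^ 2) := by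
        rw [← Finset.mul_sum, Real.sqrt_mul (sq_nonneg M), Real.sqrt_sq hM0]

lemma abs_eigenvalue_le (B : Mat2) (hB : B.IsHermitian) (i : Fin 2) :
    |hB.eigenvalues i| ≤ opNorm B := by
  have hv : B *ᵥ ⇑(hB.eigenvectorBasis i) = hB.eigenvalues i • ⇑(hB.eigenvectorBasis i) :=
    hB.mulVec_eigenvectorBasis i
  have hnorm : ‖hB.eigenvectorBasis i‖ = 1 := hB.eigenvectorBasis.orthonormal.1 i
  have h := Matrix.l2_opNorm_mulVec B (hB.eigenvectorBasis i)
  have heq : (EuclideanSpace.equiv (Fin 2) ℝ).symm (B *ᵥ hB.eigenvectorBasis i)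
      = hB.eigenvalues i • hB.eigenvectorBasis i :=
    congrArg (WithLp.equiv 2 (Fin 2 → ℝ)).symm hv
  rw [heq, norm_smul, hnorm, mul_one] at h
  rw [Real.norm_eq_abs] at h
  rw [opNorm_def]
  simpa [hnorm] using h

lemma sv_nonneg (A : Mat2) (j : Fin 2) : 0 ≤ singularValues A j := Real.sqrt_nonneg _

lemma sqrt_eig_le_sv0 (A : Mat2) (i : Fin 2) :
    Real.sqrt ((Matrix.isHermitian_conjTranspose_mul_self A).eigenvalues i) ≤ singularValues A 0 := by
  set g := fun i : Fin 2 =>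
    Real.sqrt ((Matrix.isHermitian_conjTranspose_mul_self A).eigenvalues i) with hg
  have hmono := Tuple.monotone_sort g
  have hle : ∀ a : Fin 2, a ≤ Fin.rev 0 := by decide
  have h0 : singularValues A 0 = (g ∘ Tuple.sort g) (Fin.rev 0) := rfl
  calc g i = (g ∘ Tuple.sort g) ((Tuple.sort g).symm i) := by simp
    _ ≤ (g ∘ Tuple.sort g) (Fin.rev 0) := hmono (hle _)
    _ = singularValues A 0 := h0.symm

lemma opNorm_hermitian_le (B : Mat2) (hB : B.IsHermitian) (M : ℝ) (hM0 : 0 ≤ M)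
    (h : ∀ i, |hB.eigenvalues i| ≤ M) : opNorm B ≤ M := by
  have hU := opNorm_unitary hB.eigenvectorUnitary
  have hUs : opNorm (star (hB.eigenvectorUnitary : Mat2)) = 1 := by
    rw [Matrix.star_eq_conjTranspose, opNorm_conjTranspose]; exact hU
  have hD : opNorm (Matrix.diagonal (RCLike.ofReal ∘ hB.eigenvalues)) ≤ M := by
    refine opNorm_diagonal_le _ M hM0 fun i => ?_
    simpa using h i
  calc opNorm B
      = opNorm ((hB.eigenvectorUnitary : Mat2) * Matrix.diagonal (RCLike.ofReal ∘ hB.eigenvalues)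
          * star (hB.eigenvectorUnitary : Mat2)) := by
          conv_lhs => rw [hB.spectral_theorem]
          rw [Unitary.conjStarAlgAut_apply]
    _ ≤ opNorm ((hB.eigenvectorUnitary : Mat2) * Matrix.diagonal (RCLike.ofReal ∘ hB.eigenvalues))
          * opNorm (star (hB.eigenvectorUnitary : Mat2)) := opNorm_mul_le' _ _
    _ ≤ (opNorm (hB.eigenvectorUnitary : Mat2)
          * opNorm (Matrix.diagonal (RCLike.ofReal ∘ hB.eigenvalues)))
          * opNorm (star (hB.eigenvectorUnitary : Mat2)) :=
        mul_le_mul_of_nonneg_right (opNorm_mul_le' _ _) (opNorm_nonneg' _)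
    _ ≤ M := by rw [hU, hUs, one_mul, mul_one]; exact hD

lemma opNorm_le_sv0 (A : Mat2) : opNorm A ≤ singularValues A 0 := by
  have hB := Matrix.isHermitian_conjTranspose_mul_self A
  have hpsd := Matrix.posSemidef_conjTranspose_mul_self A
  have hbound : ∀ i, |hB.eigenvalues i| ≤ singularValues A 0 ^ 2 := by
    intro i
    have hnn : (0:ℝ) ≤ hB.eigenvalues i := hpsd.eigenvalues_nonneg i
    rw [abs_of_nonneg hnn]
    have h1 := sqrt_eig_le_sv0 A i
    nlinarith [Real.sq_sqrt hnn, Real.sqrt_nonneg (hB.eigenvalues i), sv_nonneg A 0]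
  have h2 : opNorm (Aᴴ * A) ≤ singularValues A 0 ^ 2 :=
    opNorm_hermitian_le _ hB _ (by positivity) hbound
  rw [opNorm_cstar' A] at h2
  have := Real.sqrt_le_sqrt h2
  rwa [Real.sqrt_sq (opNorm_nonneg' A), Real.sqrt_sq (sv_nonneg A 0)] at this

lemma abs_det_le_sq (A : Mat2) : |A.det| ≤ opNorm A ^ 2 := by
  have hB := Matrix.isHermitian_conjTranspose_mul_self A
  have hpsd := Matrix.posSemidef_conjTranspose_mul_self A
  have hdet : (Aᴴ * A).det = A.det ^ 2 := by
    rw [Matrix.det_mul, Matrix.det_conjTranspose]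
    simp [sq]
  have hprod : (Aᴴ * A).det = hB.eigenvalues 0 * hB.eigenvalues 1 := by
    have := hB.det_eq_prod_eigenvalues
    rw [this, Fin.prod_univ_two]
    norm_num
  have hN : (0:ℝ) ≤ opNorm A ^ 2 := by positivity
  have h0 := abs_eigenvalue_le _ hB 0
  have h1 := abs_eigenvalue_le _ hB 1
  rw [abs_of_nonneg (hpsd.eigenvalues_nonneg 0), opNorm_cstar'] at h0
  rw [abs_of_nonneg (hpsd.eigenvalues_nonneg 1), opNorm_cstar'] at h1
  have hsq : A.det ^ 2 ≤ (opNorm A ^ 2) ^ 2 := by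
    rw [← hdet, hprod]
    have e0 := hpsd.eigenvalues_nonneg 0
    have e1 := hpsd.eigenvalues_nonneg 1
    nlinarith
  have := Real.sqrt_le_sqrt hsq
  rwa [Real.sqrt_sq_eq_abs, Real.sqrt_sq hN] at this

end S17
namespace S17
open Matrix Real Filter

lemma wordProd_append {m n : ℕ} (A : Fin 2 → Mat2) (w₁ : Fin m → Fin 2) (w₂ : Fin n → Fin 2) :
    wordProd A (Fin.append w₁ w₂) = wordProd A w₁ * wordProd A w₂ := by
  unfold wordProd
  rw [List.ofFn_add, List.prod_append]
  simp only [Fin.append_left, Fin.append_right]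
  exact congrArg (· * (List.ofFn fun i => A (w₂ i)).prod)
    (congrArg List.prod (List.ofFn_inj.mpr (funext fun i => congrArg A (Fin.append_left w₁ w₂ i))))

lemma det_wordProd {n : ℕ} (A : Fin 2 → Mat2) (w : Fin n → Fin 2) :
    (wordProd A w).det = ∏ j : Fin n, (A (w j)).det := by
  unfold wordProd
  have h := map_list_prod (Matrix.detMonoidHom (n := Fin 2) (R := ℝ))
    (List.ofFn fun j => A (w j))
  simp only [Matrix.coe_detMonoidHom] at h
  rw [h, List.map_ofFn, List.prod_ofFn]
  rfl

lemma wordProd_isUnit {n : ℕ} (A : Fin 2 → Mat2) (hA : ∀ i, IsUnit (A i))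
    (w : Fin n → Fin 2) : IsUnit (wordProd A w) := by
  rw [Matrix.isUnit_iff_isUnit_det, det_wordProd, isUnit_iff_ne_zero]
  rw [Finset.prod_ne_zero_iff]
  intro j _
  exact isUnit_iff_ne_zero.mp (Matrix.isUnit_iff_isUnit_det _ |>.mp (hA (w j)))

lemma wordProd_zero (A : Fin 2 → Mat2) (w : Fin 0 → Fin 2) : wordProd A w = 1 := by
  unfold wordProd
  rw [List.ofFn_zero, List.prod_nil]

lemma minNormProd_le (A : Fin 2 → Mat2) {n : ℕ} (w : Fin n → Fin 2) :
    minNormProd A n ≤ opNorm (wordProd A w) := by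
  apply ciInf_le
  refine ⟨0, fun x hx => ?_⟩
  obtain ⟨w', rfl⟩ := hx
  exact opNorm_nonneg' _

lemma minNormProd_eq (A : Fin 2 → Mat2) (n : ℕ) :
    ∃ w₀ : Fin n → Fin 2, minNormProd A n = opNorm (wordProd A w₀) := by
  obtain ⟨w₀, hw₀⟩ := Finite.exists_min (fun w : Fin n → Fin 2 => opNorm (wordProd A w))
  exact ⟨w₀, le_antisymm (minNormProd_le A w₀) (le_ciInf hw₀)⟩

lemma minNormProd_pos (A : Fin 2 → Mat2) (hA : ∀ i, IsUnit (A i)) (n : ℕ) :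
    0 < minNormProd A n := by
  obtain ⟨w₀, hw₀⟩ := minNormProd_eq A n
  rw [hw₀]
  exact opNorm_pos _ (wordProd_isUnit A hA w₀)

/-- Every word product norm is at least `exp (-(κ * n))`. -/
lemma key_lower (A : Fin 2 → Mat2) (hA : ∀ i, IsUnit (A i)) (κ : ℝ)
    (hlsr : Real.exp (-κ) ≤ lsr A) {n : ℕ} (w : Fin n → Fin 2) :
    Real.exp (-(κ * n)) ≤ opNorm (wordProd A w) := by
  set u : ℕ → ℝ := fun n => Real.log (minNormProd A n) with hu
  have hpos : ∀ k, 0 < minNormProd A k := minNormProd_pos A hA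
  have hsub : Subadditive u := by
    intro m k
    obtain ⟨w₁, hw₁⟩ := minNormProd_eq A m
    obtain ⟨w₂, hw₂⟩ := minNormProd_eq A k
    have h1 : minNormProd A (m + k) ≤ opNorm (wordProd A (Fin.append w₁ w₂)) :=
      minNormProd_le A _
    rw [wordProd_append] at h1
    have h2 : minNormProd A (m + k) ≤ minNormProd A m * minNormProd A k := by
      rw [hw₁, hw₂]; exact h1.trans (opNorm_mul_le' _ _)
    have h3 := Real.log_le_log (hpos (m + k)) h2
    rwa [Real.log_mul (hpos m).ne' (hpos k).ne'] at h3
  set δ : ℝ := min |(A 0).det| |(A 1).det| with hδ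
  have hδ0 : 0 < δ := by
    rw [hδ]
    apply lt_min <;>
      exact abs_pos.mpr (isUnit_iff_ne_zero.mp ((Matrix.isUnit_iff_isUnit_det _).mp (hA _)))
  have hδle : ∀ i : Fin 2, δ ≤ |(A i).det| := by
    intro i
    fin_cases i
    · exact min_le_left _ _
    · exact min_le_right _ _
  have hdet_lb : ∀ (k : ℕ) (w : Fin k → Fin 2), δ ^ k ≤ |(wordProd A w).det| := by
    intro k w
    rw [det_wordProd, Finset.abs_prod]
    calc δ ^ k = ∏ _j : Fin k, δ := by
          rw [Finset.prod_const, Finset.card_univ, Fintype.card_fin]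
      _ ≤ ∏ j, |(A (w j)).det| :=
          Finset.prod_le_prod (fun _ _ => hδ0.le) fun j _ => hδle (w j)
  have hop_lb : ∀ (k : ℕ) (w : Fin k → Fin 2),
      Real.sqrt (δ ^ k) ≤ opNorm (wordProd A w) := by
    intro k w
    have h1 := (hdet_lb k w).trans (abs_det_le_sq (wordProd A w))
    have := Real.sqrt_le_sqrt h1
    rwa [Real.sqrt_sq (opNorm_nonneg' _)] at this
  have hbdd : BddBelow (Set.range fun k : ℕ => u k / k) := by
    refine ⟨min 0 (Real.log δ / 2), fun x hx => ?_⟩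
    obtain ⟨k, rfl⟩ := hx
    rcases Nat.eq_zero_or_pos k with rfl | hk
    · simpa using min_le_left (0:ℝ) (Real.log δ / 2)
    · have hk0 : (0:ℝ) < k := by exact_mod_cast hk
      refine le_trans (min_le_right _ _) ?_
      have h1 : Real.sqrt (δ ^ k) ≤ minNormProd A k := by
        obtain ⟨w₀, hw₀⟩ := minNormProd_eq A k
        rw [hw₀]; exact hop_lb k w₀
      have h2 := Real.log_le_log (Real.sqrt_pos.mpr (pow_pos hδ0 k)) h1
      rw [Real.log_sqrt (pow_nonneg hδ0.le k), Real.log_pow] at h2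
      rw [div_le_div_iff₀ (by norm_num) hk0]
      nlinarith
  have hlim := hsub.tendsto_lim hbdd
  have htends : Tendsto (fun k : ℕ => minNormProd A k ^ (1/(k:ℝ))) atTop
      (𝓝 (Real.exp hsub.lim)) := by
    have h := (Real.continuous_exp.tendsto _).comp hlim
    refine h.congr' ?_
    filter_upwards [eventually_ge_atTop 1] with k hk
    rw [Function.comp_apply, Real.rpow_def_of_pos (hpos k), mul_one_div]
  have hlsr' : lsr A = Real.exp hsub.lim := htends.limUnder_eq
  rw [hlsr', Real.exp_le_exp] at hlsr
  rcases Nat.eq_zero_or_pos n with rfl | hn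
  · have : wordProd A w = 1 := wordProd_zero A w
    rw [this, opNorm_one']
    simp
  · have h1 : hsub.lim ≤ u n / n := hsub.lim_le_div hbdd hn.ne'
    have hn0 : (0:ℝ) < n := by exact_mod_cast hn
    have h2 : -(κ * n) ≤ u n := by
      have h3 := hlsr.trans h1
      rw [le_div_iff₀ hn0] at h3
      nlinarith
    calc Real.exp (-(κ * n)) ≤ Real.exp (u n) := Real.exp_le_exp.mpr h2
      _ = minNormProd A n := Real.exp_log (hpos n)
      _ ≤ opNorm (wordProd A w) := minNormProd_le A w

end S17
namespace S17
open Matrix Real Filter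

lemma svf_nonneg (s : ℝ) (A : Mat2) : 0 ≤ svf s A := by
  unfold svf
  split
  · exact Real.rpow_nonneg (abs_nonneg _) _
  · refine Finset.prod_nonneg fun i _ => ?_
    split
    · exact sv_nonneg A i
    · split
      · exact Real.rpow_nonneg (sv_nonneg A i) _
      · exact zero_le_one

lemma svf_small {s : ℝ} (hs0 : 0 ≤ s) (hs1 : s < 1) (A : Mat2) :
    svf s A = singularValues A 0 ^ s := by
  unfold svf
  have h2 : ¬ ((2:ℕ):ℝ) ≤ s := by push_cast; linarith
  rw [if_neg h2]
  have hfl : ⌊s⌋₊ = 0 := Nat.floor_eq_zero.mpr hs1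
  rw [hfl, Fin.prod_univ_two]
  norm_num

lemma svf_big {s : ℝ} (hs : ((2:ℕ):ℝ) ≤ s) (A : Mat2) :
    svf s A = |A.det| ^ (s / ((2:ℕ):ℝ)) := by
  unfold svf
  rw [if_pos hs]

lemma sum_pvec (p q : ℝ) (n : ℕ) :
    ∑ w : Fin n → Fin 2, ∏ j : Fin n, pvec p (w j) ^ q = (p ^ q + (1 - p) ^ q) ^ n := by
  have h := Finset.prod_univ_sum (fun _ : Fin n => (Finset.univ : Finset (Fin 2)))
    (fun _ j => pvec p j ^ q)
  rw [Fintype.piFinset_univ] at h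
  rw [← h, Finset.prod_const, Finset.card_univ, Fintype.card_fin]
  congr 1
  rw [Fin.sum_univ_two]
  simp [pvec]

lemma pvec_nonneg {p : ℝ} (hp0 : 0 ≤ p) (hp1 : p ≤ 1) (i : Fin 2) : 0 ≤ pvec p i := by
  fin_cases i <;> simp [pvec] <;> linarith

lemma prod_pvec_nonneg {p : ℝ} (hp0 : 0 ≤ p) (hp1 : p ≤ 1) (q : ℝ) {n : ℕ}
    (w : Fin n → Fin 2) : 0 ≤ ∏ j : Fin n, pvec p (w j) ^ q :=
  Finset.prod_nonneg fun j _ => Real.rpow_nonneg (pvec_nonneg hp0 hp1 (w j)) q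

lemma Zsum_le_of_bound (A : Fin 2 → Mat2) {p : ℝ} (hp0 : 0 ≤ p) (hp1 : p ≤ 1) (q s : ℝ)
    {n : ℕ} {b : ℝ} (hb : ∀ w : Fin n → Fin 2, svf s (wordProd A w) ^ (1 - q) ≤ b) :
    Zsum A p q s n ≤ b * (p ^ q + (1 - p) ^ q) ^ n := by
  unfold Zsum
  rw [← sum_pvec p q n, Finset.mul_sum]
  exact Finset.sum_le_sum fun w _ =>
    mul_le_mul_of_nonneg_right (hb w) (prod_pvec_nonneg hp0 hp1 q w)

lemma le_Zsum_of_bound (A : Fin 2 → Mat2) {p : ℝ} (hp0 : 0 ≤ p) (hp1 : p ≤ 1) (q s : ℝ)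
    {n : ℕ} {b : ℝ} (hb : ∀ w : Fin n → Fin 2, b ≤ svf s (wordProd A w) ^ (1 - q)) :
    b * (p ^ q + (1 - p) ^ q) ^ n ≤ Zsum A p q s n := by
  unfold Zsum
  rw [← sum_pvec p q n, Finset.mul_sum]
  exact Finset.sum_le_sum fun w _ =>
    mul_le_mul_of_nonneg_right (hb w) (prod_pvec_nonneg hp0 hp1 q w)

lemma Zsum_nonneg (A : Fin 2 → Mat2) {p : ℝ} (hp0 : 0 ≤ p) (hp1 : p ≤ 1) (q s : ℝ) (n : ℕ) :
    0 ≤ Zsum A p q s n :=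
  Finset.sum_nonneg fun w _ =>
    mul_nonneg (Real.rpow_nonneg (svf_nonneg s _) _) (prod_pvec_nonneg hp0 hp1 q w)

end S17
/-- If `ϱ̲(A₁,A₂) ≥ e^{−κ}` and `log(p^q + (1−p)^q)/((1−q)κ) ≤ 1` then
`𝔯_q(A₁,A₂,p) ≥ log(p^q + (1−p)^q)/((1−q)κ)`. -/
theorem stmt17 (A₁ A₂ : Mat2) (h1 : IsUnit A₁) (h2 : IsUnit A₂)
    (hn1 : opNorm A₁ < 1) (hn2 : opNorm A₂ < 1) (p q κ : ℝ)
    (hp : p ∈ Set.Ioo (0 : ℝ) 1) (hq : 1 < q) (hκ : 0 < κ)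
    (hlsr : Real.exp (-κ) ≤ lsr ![A₁, A₂])
    (hle : Real.log (p ^ q + (1 - p) ^ q) / ((1 - q) * κ) ≤ 1) :
    Real.log (p ^ q + (1 - p) ^ q) / ((1 - q) * κ) ≤ rqDim ![A₁, A₂] p q := by
  classical
  set A : Fin 2 → Mat2 := ![A₁, A₂] with hA_def
  have hA : ∀ i, IsUnit (A i) := by
    intro i; fin_cases i
    · simpa [hA_def] using h1
    · simpa [hA_def] using h2
  have hAn : ∀ i, opNorm (A i) < 1 := by
    intro i; fin_cases i
    · simpa [hA_def] using hn1
    · simpa [hA_def] using hn2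
  set c : ℝ := p ^ q + (1 - p) ^ q with hc_def
  have hp0 : 0 < p := hp.1
  have hp1 : p < 1 := hp.2
  have hc0 : 0 < c := by
    have := Real.rpow_pos_of_pos hp0 q
    have := Real.rpow_pos_of_pos (by linarith : (0:ℝ) < 1 - p) q
    positivity
  have hc1 : c < 1 := by
    have hpq : p ^ q < p := by
      have := Real.rpow_lt_rpow_of_exponent_gt hp0 hp1 hq
      rwa [Real.rpow_one] at this
    have hpq' : (1 - p) ^ q < 1 - p := by
      have := Real.rpow_lt_rpow_of_exponent_gt (by linarith : (0:ℝ) < 1 - p)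
        (by linarith) hq
      rwa [Real.rpow_one] at this
    rw [hc_def]; linarith
  have hlogc : Real.log c < 0 := Real.log_neg hc0 hc1
  set s₀ : ℝ := Real.log c / ((1 - q) * κ) with hs₀_def
  have hden : (1 - q) * κ < 0 := mul_neg_of_neg_of_pos (by linarith) hκ
  have hs₀pos : 0 < s₀ := div_pos_of_neg_of_neg hlogc hden
  set S : Set ℝ := {s : ℝ | 0 < s ∧ Summable (fun n : ℕ => Zsum A p q s (n + 1))} with hS_def
  -- Step A : (0, s₀) ⊆ S
  have hsubset : Set.Ioo 0 s₀ ⊆ S := by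
    rintro s ⟨hs0, hss₀⟩
    have hs1 : s < 1 := lt_of_lt_of_le hss₀ hle
    refine ⟨hs0, ?_⟩
    set r : ℝ := Real.exp (κ * s * (q - 1)) * c with hr_def
    have hr0 : 0 ≤ r := mul_nonneg (Real.exp_pos _).le hc0.le
    have hr1 : r < 1 := by
      have hexp : r = Real.exp (κ * s * (q - 1) + Real.log c) := by
        rw [Real.exp_add, Real.exp_log hc0]
      rw [hexp, Real.exp_lt_one_iff]
      have h3 : Real.log c < s * ((1 - q) * κ) := by
        rw [hs₀_def] at hss₀
        have := (lt_div_iff_of_neg hden).mp hss₀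
        linarith
      nlinarith
    have hbound : ∀ n : ℕ, Zsum A p q s n ≤ r ^ n := by
      intro n
      have hb : ∀ w : Fin n → Fin 2,
          svf s (wordProd A w) ^ (1 - q) ≤ Real.exp (κ * s * (q - 1)) ^ n := by
        intro w
        have hsv : Real.exp (-(κ * n)) ≤ singularValues (wordProd A w) 0 :=
          (S17.key_lower A hA κ hlsr w).trans (S17.opNorm_le_sv0 _)
        have hsvf : svf s (wordProd A w) = singularValues (wordProd A w) 0 ^ s :=
          S17.svf_small hs0.le hs1 _
        have hE : Real.exp (-(κ * n)) ^ s = Real.exp (-(κ * n) * s) := by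
          rw [Real.rpow_def_of_pos (Real.exp_pos _), Real.log_exp]
        have h1' : Real.exp (-(κ * n) * s) ≤ singularValues (wordProd A w) 0 ^ s := by
          rw [← hE]
          exact Real.rpow_le_rpow (Real.exp_pos _).le hsv hs0.le
        have h3' : svf s (wordProd A w) ^ (1 - q)
            ≤ Real.exp (-(κ * n) * s) ^ (1 - q) := by
          rw [hsvf]
          exact Real.rpow_le_rpow_of_nonpos (Real.exp_pos _) h1' (by linarith)
        have h4' : Real.exp (-(κ * n) * s) ^ (1 - q)
            = Real.exp (κ * s * (q - 1)) ^ n := by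
          rw [Real.rpow_def_of_pos (Real.exp_pos _), Real.log_exp, ← Real.exp_nat_mul]
          congr 1
          ring
        rw [← h4']
        exact h3'
      calc Zsum A p q s n ≤ Real.exp (κ * s * (q - 1)) ^ n * c ^ n :=
            S17.Zsum_le_of_bound A hp0.le hp1.le q s hb
        _ = r ^ n := by rw [hr_def, mul_pow]
    have hgeo : Summable (fun n : ℕ => r ^ (n + 1)) := by
      have := (summable_geometric_of_lt_one hr0 hr1).mul_left r
      refine this.congr fun n => ?_
      rw [pow_succ, mul_comm]
    exact Summable.of_nonneg_of_le
      (fun n => S17.Zsum_nonneg A hp0.le hp1.le q s (n + 1))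
      (fun n => hbound (n + 1)) hgeo
  -- Step B : S is bounded above
  have hBdd : BddAbove S := by
    set m : ℝ := max (opNorm A₁) (opNorm A₂) with hm_def
    have hm0 : 0 < m := lt_max_of_lt_left (S17.opNorm_pos _ h1)
    have hm1 : m < 1 := max_lt hn1 hn2
    have hlogm : Real.log m < 0 := Real.log_neg hm0 hm1
    have hAle : ∀ i, opNorm (A i) ≤ m := by
      intro i; fin_cases i
      · simpa [hA_def, hm_def] using le_max_left _ _
      · simpa [hA_def, hm_def] using le_max_right _ _
    refine ⟨max 2 ((-Real.log c) / ((1 - q) * Real.log m)), fun s hs => ?_⟩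
    by_contra hgt
    push_neg at hgt
    have hs2 : ((2:ℕ):ℝ) ≤ s := by
      push_cast
      exact (le_max_left _ _).trans hgt.le
    have hs0' : 0 < s := lt_of_lt_of_le (by norm_num) hs2
    set R : ℝ := m ^ (s * (1 - q)) * c with hR_def
    have hR1 : 1 ≤ R := by
      have hpos' : 0 < (1 - q) * Real.log m :=
        mul_pos_of_neg_of_neg (by linarith) hlogm
      have hs' : (-Real.log c) / ((1 - q) * Real.log m) ≤ s :=
        (le_max_right _ _).trans hgt.le
      rw [div_le_iff₀ hpos'] at hs'
      have hexp : R = Real.exp (Real.log m * (s * (1 - q)) + Real.log c) := by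
        rw [hR_def, Real.exp_add, Real.exp_log hc0, Real.rpow_def_of_pos hm0]
      rw [hexp, Real.one_le_exp_iff]
      nlinarith
    have hlower : ∀ n : ℕ, R ^ n ≤ Zsum A p q s n := by
      intro n
      have hb : ∀ w : Fin n → Fin 2,
          (m ^ (s * (1 - q))) ^ n ≤ svf s (wordProd A w) ^ (1 - q) := by
        intro w
        have hdet_pos : 0 < |(wordProd A w).det| :=
          abs_pos.mpr (isUnit_iff_ne_zero.mp
            ((Matrix.isUnit_iff_isUnit_det _).mp (S17.wordProd_isUnit A hA w)))
        have hdetle : |(wordProd A w).det| ≤ m ^ (2 * n) := by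
          rw [S17.det_wordProd, Finset.abs_prod]
          calc ∏ j : Fin n, |(A (w j)).det| ≤ ∏ _j : Fin n, m ^ 2 := by
                refine Finset.prod_le_prod (fun _ _ => abs_nonneg _) fun j _ => ?_
                exact (S17.abs_det_le_sq _).trans
                  (pow_le_pow_left₀ (S17.opNorm_nonneg' _) (hAle (w j)) 2)
            _ = m ^ (2 * n) := by
                rw [Finset.prod_const, Finset.card_univ, Fintype.card_fin, ← pow_mul]
        have hsvf : svf s (wordProd A w) = |(wordProd A w).det| ^ (s / ((2:ℕ):ℝ)) :=
          S17.svf_big hs2 _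
        have hsvf_pos : 0 < svf s (wordProd A w) := by
          rw [hsvf]; exact Real.rpow_pos_of_pos hdet_pos _
        have h1' : svf s (wordProd A w) ≤ m ^ ((n:ℝ) * s) := by
          rw [hsvf]
          calc |(wordProd A w).det| ^ (s / ((2:ℕ):ℝ))
              ≤ (m ^ (2 * n)) ^ (s / ((2:ℕ):ℝ)) :=
                Real.rpow_le_rpow (abs_nonneg _) hdetle
                  (div_nonneg hs0'.le (by norm_num))
            _ = m ^ ((n:ℝ) * s) := by
                rw [← Real.rpow_natCast m (2 * n), ← Real.rpow_mul hm0.le]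
                congr 1
                push_cast
                ring
        have h2' : (m ^ ((n:ℝ) * s)) ^ (1 - q) ≤ svf s (wordProd A w) ^ (1 - q) :=
          Real.rpow_le_rpow_of_nonpos hsvf_pos h1' (by linarith)
        have h3' : (m ^ ((n:ℝ) * s)) ^ (1 - q) = (m ^ (s * (1 - q))) ^ n := by
          rw [← Real.rpow_mul hm0.le, ← Real.rpow_natCast (m ^ (s * (1 - q))) n,
            ← Real.rpow_mul hm0.le]
          congr 1
          ring
        rw [← h3']
        exact h2'
      calc R ^ n = (m ^ (s * (1 - q))) ^ n * c ^ n := by rw [hR_def, mul_pow]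
        _ ≤ Zsum A p q s n := S17.le_Zsum_of_bound A hp0.le hp1.le q s hb
    have htend := hs.2.tendsto_atTop_zero
    obtain ⟨n, hn⟩ := (htend.eventually_lt_const one_pos).exists
    have : (1:ℝ) ≤ R ^ (n + 1) := one_le_pow₀ hR1
    linarith [hlower (n + 1)]
  -- Step C : conclude
  have hne : (Set.Ioo (0:ℝ) s₀).Nonempty := Set.nonempty_Ioo.mpr hs₀pos
  have h := csSup_le_csSup hBdd hne hsubset
  rw [csSup_Ioo hs₀pos] at h
  exact h
end
end
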